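/- arXiv:1104.3258 — 12 statements merged into one kernel-verified Lean document; each statement's English description precedes it below -/
import Mathlib

section
/- Let Ψ be a finite set, let p : Ψ → ℝ be the prior probability mass function with p(ψ) > 0 for all ψ and ∑_ψ p(ψ) = 1, and let q : Ψ → ℝ be the posterior probability mass function with q(ψ) ≥ 0 and ∑_ψ q(ψ) = 1. For the loss function L(ψ, a) = 1{ψ ≠ a}/p(ψ), the posterior risk of an action a ∈ Ψ equals r(a) = ∑_ψ q(ψ)/p(ψ) − q(a)/p(a), and any maximizer a* of the relative belief ratio q(ψ)/p(ψ) over Ψ satisfies r(a*) ≤ r(a) for every a ∈ Ψ; that is, the least relative surprise estimate is a Bayes rule. -/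
open scoped Classical

/-- For a finite set `Ψ`, a strictly positive prior pmf `p` and a
posterior pmf `q`, under the loss `L(ψ, a) = 1{ψ ≠ a}/p(ψ)` the posterior risk of an
action `a` equals `∑ ψ, q ψ / p ψ - q a / p a`, and any maximizer of the relative
belief ratio `q ψ / p ψ` minimizes the posterior risk (the LRSE is a Bayes rule). -/
theorem stmt_0 {Ψ : Type*} [Fintype Ψ] (p q : Ψ → ℝ)
    (hp : ∀ ψ, 0 < p ψ) (hp1 : ∑ ψ, p ψ = 1)
    (hq : ∀ ψ, 0 ≤ q ψ) (hq1 : ∑ ψ, q ψ = 1)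
    (r : Ψ → ℝ)
    (hr : ∀ a, r a = ∑ ψ, (if ψ ≠ a then 1 / p ψ else 0) * q ψ)
    (astar : Ψ) (hstar : ∀ ψ, q ψ / p ψ ≤ q astar / p astar) :
    (∀ a, r a = (∑ ψ, q ψ / p ψ) - q a / p a) ∧ (∀ a, r astar ≤ r a) := by
  have key : ∀ a, r a = (∑ ψ, q ψ / p ψ) - q a / p a := by
    intro a
    rw [hr a]
    have : ∀ ψ, (if ψ ≠ a then 1 / p ψ else 0) * q ψ
        = q ψ / p ψ - (if ψ = a then q a / p a else 0) := by
      intro ψ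
      by_cases h : ψ = a
      · subst h; simp
      · simp [h, div_eq_mul_inv, mul_comm]
    simp_rw [this]
    rw [Finset.sum_sub_distrib, Finset.sum_ite_eq' Finset.univ a]
    simp
  refine ⟨key, fun a => ?_⟩
  rw [key a, key astar]
  have := hstar a
  linarith
end

section
/- Let Ψ be a countable set, p : Ψ → ℝ the prior probability mass function with p(ψ) > 0 for all ψ and ∑_ψ p(ψ) = 1, and q : Ψ → ℝ the posterior probability mass function with q(ψ) ≥ 0 and ∑_ψ q(ψ) = 1. For η > 0 define the loss L_η(ψ, a) = 1{ψ ≠ a}/max(η, p(ψ)), whose posterior risk r_η(a) = ∑_{ψ ≠ a} q(ψ)/max(η, p(ψ)) is finite. Suppose ψ* is the unique maximizer of the relative belief ratio, i.e., q(a)/p(a) < q(ψ*)/p(ψ*) for all a ≠ ψ*. Then for any sequence η_n > 0 with η_n → 0 and any sequence a_n ∈ Ψ such that a_n minimizes r_{η_n} over Ψ, one has a_n = ψ* for all sufficiently large n; in particular the Bayes rules converge to the least relative surprise estimate as η → 0. -/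
open Filter
open scoped Classical Topology

/-- For a countable `Ψ`, prior pmf `p > 0` and posterior pmf `q`,
with the loss `L_η(ψ,a) = 1{ψ ≠ a}/max(η, p ψ)` and posterior risk
`r η a = ∑' ψ, 1{ψ ≠ a} q ψ / max(η, p ψ)`, if `ψ*` is the unique maximizer of the
relative belief ratio `q ψ / p ψ`, then for any positive sequence `η_n → 0` and any
sequence of Bayes rule values `a_n` (minimizers of `r (η n)`), eventually `a_n = ψ*`. -/
theorem stmt_2 {Ψ : Type*} [Countable Ψ] (p q : Ψ → ℝ)
    (hp : ∀ ψ, 0 < p ψ) (hp1 : ∑' ψ, p ψ = 1)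
    (hq : ∀ ψ, 0 ≤ q ψ) (hq1 : ∑' ψ, q ψ = 1)
    (r : ℝ → Ψ → ℝ)
    (hr : ∀ η a, r η a = ∑' ψ, (if ψ ≠ a then q ψ / max η (p ψ) else 0))
    (ψstar : Ψ)
    (hstar : ∀ a, a ≠ ψstar → q a / p a < q ψstar / p ψstar)
    (η : ℕ → ℝ) (hη : ∀ n, 0 < η n) (hη0 : Tendsto η atTop (𝓝 0))
    (a : ℕ → Ψ) (ha : ∀ n, ∀ b, r (η n) (a n) ≤ r (η n) b) :
    ∀ᶠ n in atTop, a n = ψstar := by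
  have hqs : Summable q := by
    by_contra h
    rw [tsum_eq_zero_of_not_summable h] at hq1
    norm_num at hq1
  have hgsum : ∀ η' : ℝ, 0 < η' → Summable (fun ψ => q ψ / max η' (p ψ)) := by
    intro η' hη'
    apply Summable.of_nonneg_of_le
      (fun ψ => div_nonneg (hq ψ) (le_trans hη'.le (le_max_left _ _)))
      (fun ψ => ?_) (hqs.div_const η')
    gcongr
    · exact hq ψ
    · exact le_max_left _ _
  have key : ∀ η' : ℝ, 0 < η' → ∀ b,
      r η' b = (∑' ψ, q ψ / max η' (p ψ)) - q b / max η' (p b) := by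
    intro η' hη' b
    rw [hr]
    have heq : ∀ ψ, (if ψ ≠ b then q ψ / max η' (p ψ) else 0)
        = q ψ / max η' (p ψ) - (if ψ = b then q ψ / max η' (p ψ) else 0) := by
      intro ψ; by_cases hψ : ψ = b <;> simp [hψ]
    rw [tsum_congr heq, Summable.tsum_sub (hgsum η' hη')]
    · rw [tsum_eq_single b (fun ψ h => if_neg h), if_pos rfl]
    · apply Summable.of_nonneg_of_le (fun ψ => ?_) (fun ψ => ?_) (hgsum η' hη')
      · by_cases hψ : ψ = b <;>
          simp [hψ, div_nonneg (hq b) (le_trans hη'.le (le_max_left _ _))]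
      · by_cases hψ : ψ = b <;>
          simp [hψ, div_nonneg (hq ψ) (le_trans hη'.le (le_max_left _ _))]
  filter_upwards [hη0.eventually (gt_mem_nhds (hp ψstar))] with n hn
  by_contra hne
  have h1 : q (a n) / max (η n) (p (a n)) ≤ q (a n) / p (a n) := by
    gcongr
    · exact hq (a n)
    · exact hp (a n)
    · exact le_max_right _ _
  have h2 : q ψstar / max (η n) (p ψstar) = q ψstar / p ψstar := by
    rw [max_eq_right hn.le]
  have h3 : r (η n) ψstar < r (η n) (a n) := by
    rw [key _ (hη n), key _ (hη n), h2]
    have := hstar (a n) hne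
    linarith
  exact absurd (ha n ψstar) (not_le.mpr h3)
end

section
/- Let Ψ be a countable set, p : Ψ → ℝ the prior probability mass function with p(ψ) > 0 for all ψ and ∑_ψ p(ψ) = 1, and q : Ψ → ℝ the posterior probability mass function with q(ψ) ≥ 0 and ∑_ψ q(ψ) = 1. Suppose ψ* is the unique maximizer of the relative belief ratio q(ψ)/p(ψ). Then for every η with 0 < η ≤ p(ψ*), the element ψ* minimizes the posterior risk r_η(a) = ∑_{ψ ≠ a} q(ψ)/max(η, p(ψ)) over a ∈ Ψ; equivalently, ψ* maximizes a ↦ q(a)/max(η, p(a)). That is, for all sufficiently small η the value of the Bayes rule under the loss L_η(ψ, a) = 1{ψ ≠ a}/max(η, p(ψ)) is the least relative surprise estimate. -/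
open scoped Classical

/-- For a countable `Ψ`, prior pmf `p > 0` and posterior pmf `q`,
if `ψ*` is the unique maximizer of the relative belief ratio `q ψ / p ψ`, then for
every `η` with `0 < η ≤ p ψ*`, `ψ*` minimizes the posterior risk
`r η a = ∑' ψ, 1{ψ ≠ a} q ψ / max(η, p ψ)`; equivalently, `ψ*` maximizes
`a ↦ q a / max(η, p a)`. -/
theorem stmt_3 {Ψ : Type*} [Countable Ψ] (p q : Ψ → ℝ)
    (hp : ∀ ψ, 0 < p ψ) (hp1 : ∑' ψ, p ψ = 1)
    (hq : ∀ ψ, 0 ≤ q ψ) (hq1 : ∑' ψ, q ψ = 1)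
    (r : ℝ → Ψ → ℝ)
    (hr : ∀ η a, r η a = ∑' ψ, (if ψ ≠ a then q ψ / max η (p ψ) else 0))
    (ψstar : Ψ)
    (hstar : ∀ a, a ≠ ψstar → q a / p a < q ψstar / p ψstar) :
    ∀ η, 0 < η → η ≤ p ψstar →
      (∀ a, r η ψstar ≤ r η a) ∧
      (∀ a, q a / max η (p a) ≤ q ψstar / max η (p ψstar)) := by
  intro η hη hηp
  have hqsum : Summable q := by
    by_contra h
    rw [tsum_eq_zero_of_not_summable h] at hq1
    norm_num at hq1
  set f : Ψ → ℝ := fun ψ => q ψ / max η (p ψ) with hf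
  have hfsum : Summable f := by
    exact Summable.of_nonneg_of_le
      (fun ψ => div_nonneg (hq ψ) (le_trans hη.le (le_max_left _ _)))
      (fun ψ => div_le_div_of_nonneg_left (hq ψ) hη (le_max_left _ _))
      (hqsum.div_const η)
  -- key inequality: f a ≤ f ψstar
  have hmaxstar : max η (p ψstar) = p ψstar := max_eq_right hηp
  have key : ∀ a, f a ≤ f ψstar := by
    intro a
    by_cases ha : a = ψstar
    · simp [ha]
    · have h1 : f a ≤ q a / p a := by
        apply div_le_div_of_nonneg_left (hq a) (hp a) (le_max_right _ _)
      have h2 : q a / p a < q ψstar / p ψstar := hstar a ha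
      simp only [hf, hmaxstar]
      linarith
  refine ⟨fun a => ?_, key⟩
  have hrw : ∀ a, r η a = (∑' ψ, f ψ) - f a := by
    intro a
    rw [hr]
    have := Summable.tsum_eq_add_tsum_ite hfsum a
    have heq : ∀ ψ, (if ψ ≠ a then q ψ / max η (p ψ) else 0)
        = if ψ = a then 0 else f ψ := by
      intro ψ; by_cases hψ : ψ = a <;> simp [hψ, hf]
    simp_rw [heq]
    linarith
  rw [hrw, hrw]
  linarith [key a]
end

section
/- Let Θ and 𝒳 be measurable spaces, Π a probability measure on Θ, P a Markov kernel from Θ to 𝒳, ΨT a countable set, Ψ : Θ → ΨT measurable with p(ψ) = Π(Ψ⁻¹{ψ}) > 0 for all ψ, and h : ΨT → [0, ∞) with ∑_ψ h(ψ) p(ψ) < ∞. Let M be the prior predictive measure M(A) = ∫_Θ P_θ(A) Π(dθ), and let q(ψ | x) be posterior probability mass functions, measurable in x with ∑_ψ q(ψ | x) = 1, satisfying the Bayes property ∫_A q(ψ | x) M(dx) = ∫_{Ψ⁻¹{ψ}} P_θ(A) Π(dθ) for every ψ and every measurable A ⊆ 𝒳. Let δ : 𝒳 → ΨT be measurable with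 δ(x) a maximizer of ψ ↦ q(ψ | x)/p(ψ) for every x. Then δ is Bayesian unbiased for the loss L(θ, a) = 1{Ψ(θ) ≠ a} h(Ψ(θ)): ∫_Θ ∫_Θ ∫_𝒳 L(θ′, δ(x)) P_θ(dx) Π(dθ) Π(dθ′) ≥ ∫_Θ ∫_𝒳 L(θ, δ(x)) P_θ(dx) Π(dθ). -/
open MeasureTheory ProbabilityTheory
open scoped Classical

/-- With a proper prior `Pri`, Markov kernel `P`, countable parameter
of interest `Ψ` with marginal prior pmf `p > 0`, loss `L(θ,a) = 1{Ψ θ ≠ a} h(Ψ θ)`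
with `∑' ψ, h ψ * p ψ < ∞`, prior predictive `M`, and marginal posterior pmfs
`q ψ x` satisfying the Bayes property, any measurable selector `δ` of maximizers of
the relative belief ratio `ψ ↦ q ψ x / p ψ` (the LRSE) is Bayesian unbiased. -/
theorem stmt_5 {Θ 𝒳 : Type*} [MeasurableSpace Θ] [MeasurableSpace 𝒳]
    (Pri : Measure Θ) [IsProbabilityMeasure Pri]
    (P : Kernel Θ 𝒳) [IsMarkovKernel P]
    {ΨT : Type*} [Countable ΨT] [MeasurableSpace ΨT] [MeasurableSingletonClass ΨT]
    (Ψ : Θ → ΨT) (hΨ : Measurable Ψ)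
    (p : ΨT → ℝ) (hp : ∀ ψ, p ψ = (Pri (Ψ ⁻¹' {ψ})).toReal)
    (hppos : ∀ ψ, 0 < p ψ)
    (h : ΨT → ℝ) (hh : ∀ ψ, 0 ≤ h ψ) (hhsum : Summable fun ψ => h ψ * p ψ)
    (M : Measure 𝒳)
    (hM : ∀ A : Set 𝒳, MeasurableSet A → M A = ∫⁻ θ, P θ A ∂Pri)
    (q : ΨT → 𝒳 → ℝ) (hqmeas : ∀ ψ, Measurable (q ψ))
    (hqnn : ∀ ψ x, 0 ≤ q ψ x) (hqsum : ∀ x, ∑' ψ, q ψ x = 1)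
    (hBayes : ∀ (ψ : ΨT) (A : Set 𝒳), MeasurableSet A →
      ∫ x in A, q ψ x ∂M = ∫ θ in Ψ ⁻¹' {ψ}, ((P θ) A).toReal ∂Pri)
    (δ : 𝒳 → ΨT) (hδ : Measurable δ)
    (hmax : ∀ x ψ, q ψ x / p ψ ≤ q (δ x) x / p (δ x)) :
    ∫ θ, ∫ x, (if Ψ θ ≠ δ x then h (Ψ θ) else 0) ∂(P θ) ∂Pri
      ≤ ∫ θ', ∫ θ, ∫ x, (if Ψ θ' ≠ δ x then h (Ψ θ') else 0) ∂(P θ) ∂Pri ∂Pri := by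
  classical
  set A : ΨT → Set 𝒳 := fun ψ => δ ⁻¹' {ψ} with hAdef
  have hAm : ∀ ψ, MeasurableSet (A ψ) := fun ψ => hδ (measurableSet_singleton ψ)
  set T : ΨT → Set Θ := fun ψ => Ψ ⁻¹' {ψ} with hTdef
  have hTm : ∀ ψ, MeasurableSet (T ψ) := fun ψ => hΨ (measurableSet_singleton ψ)
  have hTdisj : Pairwise (Function.onFun Disjoint T) := by
    intro ψ ψ' hne
    refine Set.disjoint_left.mpr fun θ h1 h2 => hne ?_
    have e1 : Ψ θ = ψ := h1
    have e2 : Ψ θ = ψ' := h2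
    rw [← e1, e2]
  have hTunion : (⋃ ψ, T ψ) = Set.univ := by
    ext θ; simp [hTdef]
  -- M is a probability measure
  have hMuniv : M Set.univ = 1 := by
    rw [hM _ MeasurableSet.univ]
    simp
  have hMprob : IsProbabilityMeasure M := ⟨hMuniv⟩
  -- facts about p
  have hPriT : ∀ ψ, Pri (T ψ) = ENNReal.ofReal (p ψ) := fun ψ => by
    rw [hp ψ, ENNReal.ofReal_toReal (measure_ne_top _ _)]
  have hPri_tsum : ∑' ψ, Pri (T ψ) = 1 := by
    rw [← measure_iUnion hTdisj hTm, hTunion, measure_univ]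
  have hpsummable : Summable p := by
    have : Summable fun ψ => (Pri (T ψ)).toReal :=
      ENNReal.summable_toReal (by rw [hPri_tsum]; exact ENNReal.one_ne_top)
    exact this.congr fun ψ => (hp ψ).symm
  have hptsum : ∑' ψ, p ψ = 1 := by
    have h1 := ENNReal.tsum_toReal_eq (f := fun ψ => Pri (T ψ)) fun ψ => measure_ne_top _ _
    rw [hPri_tsum] at h1
    simp only [ENNReal.toReal_one] at h1
    have h2 : ∑' ψ, p ψ = ∑' ψ, (Pri (T ψ)).toReal := tsum_congr fun ψ => hp ψ
    rw [h2]
    exact h1.symm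
  -- key pointwise fact: the maximizer has relative belief ratio ≥ 1
  have hkey : ∀ x, p (δ x) ≤ q (δ x) x := by
    intro x
    by_contra hlt
    push_neg at hlt
    set c : ℝ := q (δ x) x / p (δ x) with hc
    have hc1 : c < 1 := (div_lt_one (hppos _)).2 hlt
    have hb : ∀ ψ, q ψ x ≤ c * p ψ := fun ψ => (div_le_iff₀ (hppos ψ)).1 (hmax x ψ)
    have hqs : Summable fun ψ => q ψ x := by
      by_contra hns
      have h1 := hqsum x
      rw [tsum_eq_zero_of_not_summable hns] at h1
      exact one_ne_zero h1.symm
    have := Summable.tsum_le_tsum hb hqs (hpsummable.mul_left c)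
    rw [hqsum x, tsum_mul_left, hptsum, mul_one] at this
    linarith
  -- q ψ integrates to p ψ, hence is integrable
  have hqint_val : ∀ ψ, ∫ x, q ψ x ∂M = p ψ := by
    intro ψ
    have := hBayes ψ Set.univ MeasurableSet.univ
    rw [Measure.restrict_univ] at this
    rw [this]
    have : ∀ θ ∈ T ψ, ((P θ) Set.univ).toReal = (1 : ℝ) := fun θ _ => by simp
    rw [setIntegral_congr_fun (hTm ψ) this, setIntegral_const, smul_eq_mul, mul_one, hp ψ]
    rfl
  have hqint : ∀ ψ, Integrable (q ψ) M := by
    intro ψ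
    by_contra hni
    have hv := hqint_val ψ
    rw [integral_undef hni] at hv
    exact absurd hv.symm (ne_of_gt (hppos ψ))
  -- innermost integral
  have hinner : ∀ (ψ : ΨT) (θ : Θ),
      ∫ x, (if ψ ≠ δ x then h ψ else 0) ∂(P θ) = h ψ * (1 - ((P θ) (A ψ)).toReal) := by
    intro ψ θ
    have heq : (fun x => if ψ ≠ δ x then h ψ else 0)
        = (A ψ)ᶜ.indicator (fun _ => h ψ) := by
      ext x
      by_cases hx : δ x = ψ
      · simp [Set.indicator, hAdef, hx]
      · simp [Set.indicator, hAdef, hx, Ne.symm hx]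
    rw [heq, integral_indicator_const _ (hAm ψ).compl, measureReal_def,
      measure_compl (hAm ψ) (measure_ne_top _ _), measure_univ,
      ENNReal.toReal_sub_of_le prob_le_one ENNReal.one_ne_top, ENNReal.toReal_one,
      smul_eq_mul, mul_comm]
  -- measurability and integrability of θ ↦ (P θ (A ψ)).toReal
  have hPAmeas : ∀ ψ, Measurable fun θ => ((P θ) (A ψ)).toReal := fun ψ =>
    (P.measurable_coe (hAm ψ)).ennreal_toReal
  have hPAle : ∀ ψ θ, ((P θ) (A ψ)).toReal ≤ 1 := fun ψ θ => by
    have : (P θ) (A ψ) ≤ 1 := prob_le_one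
    simpa using ENNReal.toReal_mono ENNReal.one_ne_top this
  have hPAint : ∀ ψ, Integrable (fun θ => ((P θ) (A ψ)).toReal) Pri := fun ψ =>
    Integrable.mono' (integrable_const 1) (hPAmeas ψ).aestronglyMeasurable
      (ae_of_all _ fun θ => by
        rw [Real.norm_eq_abs, abs_of_nonneg ENNReal.toReal_nonneg]; exact hPAle ψ θ)
  have hMAval : ∀ ψ, ∫ θ, ((P θ) (A ψ)).toReal ∂Pri = (M (A ψ)).toReal := by
    intro ψ
    rw [integral_toReal (P.measurable_coe (hAm ψ)).aemeasurable
      (ae_of_all _ fun θ => measure_lt_top _ _), hM _ (hAm ψ)]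
  have hMAle : ∀ ψ, (M (A ψ)).toReal ≤ 1 := fun ψ => by
    have : M (A ψ) ≤ 1 := prob_le_one
    simpa using ENNReal.toReal_mono ENNReal.one_ne_top this
  -- the RHS inner double integral
  have hB1 : ∀ θ' : Θ, ∫ θ, ∫ x, (if Ψ θ' ≠ δ x then h (Ψ θ') else 0) ∂(P θ) ∂Pri
      = h (Ψ θ') * (1 - (M (A (Ψ θ'))).toReal) := by
    intro θ'
    have : ∀ θ, ∫ x, (if Ψ θ' ≠ δ x then h (Ψ θ') else 0) ∂(P θ)
        = h (Ψ θ') * (1 - ((P θ) (A (Ψ θ'))).toReal) := fun θ => hinner (Ψ θ') θ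
    rw [integral_congr_ae (ae_of_all _ this), integral_const_mul,
      integral_sub (integrable_const 1) (hPAint (Ψ θ')), integral_const, hMAval]
    simp
  -- integrability of h ∘ Ψ
  have hhΨmeas : Measurable fun θ => h (Ψ θ) := (measurable_of_countable h).comp hΨ
  have hhint : Integrable (fun θ => h (Ψ θ)) Pri := by
    refine ⟨hhΨmeas.aestronglyMeasurable, ?_⟩
    rw [hasFiniteIntegral_iff_ofReal (ae_of_all _ fun θ => hh (Ψ θ))]
    have hsplit : ∫⁻ θ, ENNReal.ofReal (h (Ψ θ)) ∂Pri
        = ∑' ψ, ∫⁻ θ in T ψ, ENNReal.ofReal (h (Ψ θ)) ∂Pri := by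
      rw [← setLIntegral_univ, ← hTunion, lintegral_iUnion hTm hTdisj]
    have hpiece : ∀ ψ, ∫⁻ θ in T ψ, ENNReal.ofReal (h (Ψ θ)) ∂Pri
        = ENNReal.ofReal (h ψ * p ψ) := by
      intro ψ
      rw [setLIntegral_congr_fun (hTm ψ) (fun θ (hθ : Ψ θ = ψ) => by rw [hθ]),
        setLIntegral_const, hPriT, ← ENNReal.ofReal_mul (hh ψ)]
    rw [hsplit]
    simp_rw [hpiece]
    rw [← ENNReal.ofReal_tsum_of_nonneg (fun ψ => mul_nonneg (hh ψ) (hppos ψ).le) hhsum]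
    exact ENNReal.ofReal_lt_top
  -- splitting an integral over the partition T
  have hsplitInt : ∀ F : Θ → ℝ, Integrable F Pri →
      ∫ θ, F θ ∂Pri = ∑' ψ, ∫ θ in T ψ, F θ ∂Pri := by
    intro F hF
    rw [← setIntegral_univ, ← hTunion, integral_iUnion hTm hTdisj]
    rw [hTunion]
    exact hF.integrableOn
  -- compute the RHS
  set g : ΨT → ℝ := fun ψ => h ψ * (1 - (M (A ψ)).toReal) with hgdef
  have hgnn : ∀ ψ, 0 ≤ g ψ := fun ψ =>
    mul_nonneg (hh ψ) (by linarith [hMAle ψ])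
  have hgle : ∀ ψ, g ψ ≤ h ψ := fun ψ => by
    have : (1 - (M (A ψ)).toReal) ≤ 1 := by
      have : (0:ℝ) ≤ (M (A ψ)).toReal := ENNReal.toReal_nonneg
      linarith
    calc g ψ ≤ h ψ * 1 := mul_le_mul_of_nonneg_left this (hh ψ)
    _ = h ψ := mul_one _
  have hgint : Integrable (fun θ => g (Ψ θ)) Pri :=
    Integrable.mono' hhint ((measurable_of_countable g).comp hΨ).aestronglyMeasurable
      (ae_of_all _ fun θ => by
        rw [Real.norm_eq_abs, abs_of_nonneg (hgnn (Ψ θ))]; exact hgle (Ψ θ))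
  have hRHS : ∫ θ', ∫ θ, ∫ x, (if Ψ θ' ≠ δ x then h (Ψ θ') else 0) ∂(P θ) ∂Pri ∂Pri
      = ∑' ψ, p ψ * g ψ := by
    rw [integral_congr_ae (ae_of_all _ hB1)]
    rw [hsplitInt _ hgint]
    refine tsum_congr fun ψ => ?_
    rw [setIntegral_congr_fun (hTm ψ) (fun θ (hθ : Ψ θ = ψ) => by rw [hθ]),
      setIntegral_const, smul_eq_mul, hp ψ]
    rfl
  -- compute the LHS
  have hFmeas : Measurable fun θ => ((P θ) (A (Ψ θ))).toReal := by
    have hs : MeasurableSet {pr : Θ × 𝒳 | δ pr.2 = Ψ pr.1} := by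
      have : {pr : Θ × 𝒳 | δ pr.2 = Ψ pr.1}
          = ⋃ ψ, ((fun pr : Θ × 𝒳 => δ pr.2) ⁻¹' {ψ}) ∩ ((fun pr : Θ × 𝒳 => Ψ pr.1) ⁻¹' {ψ}) := by
        ext pr
        simp only [Set.mem_setOf_eq, Set.mem_iUnion, Set.mem_inter_iff, Set.mem_preimage,
          Set.mem_singleton_iff]
        constructor
        · intro he; exact ⟨Ψ pr.1, he, rfl⟩
        · rintro ⟨ψ, h1, h2⟩; rw [h1, h2]
      rw [this]
      exact MeasurableSet.iUnion fun ψ =>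
        ((hδ.comp measurable_snd) (measurableSet_singleton ψ)).inter
          ((hΨ.comp measurable_fst) (measurableSet_singleton ψ))
    have := Kernel.measurable_kernel_prodMk_left (κ := P) hs
    have heq : ∀ θ, Prod.mk θ ⁻¹' {pr : Θ × 𝒳 | δ pr.2 = Ψ pr.1} = A (Ψ θ) := by
      intro θ; ext x; simp [hAdef]
    simp only [heq] at this
    exact this.ennreal_toReal
  have hFint : Integrable (fun θ => h (Ψ θ) * (1 - ((P θ) (A (Ψ θ))).toReal)) Pri := by
    refine Integrable.mono' hhint
      (hhΨmeas.mul (measurable_const.sub hFmeas)).aestronglyMeasurable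
      (ae_of_all _ fun θ => ?_)
    rw [Real.norm_eq_abs, abs_of_nonneg (mul_nonneg (hh (Ψ θ)) (by linarith [hPAle (Ψ θ) θ]))]
    have h0 : (0:ℝ) ≤ ((P θ) (A (Ψ θ))).toReal := ENNReal.toReal_nonneg
    calc h (Ψ θ) * (1 - ((P θ) (A (Ψ θ))).toReal) ≤ h (Ψ θ) * 1 :=
      mul_le_mul_of_nonneg_left (by linarith) (hh (Ψ θ))
    _ = h (Ψ θ) := mul_one _
  have hLHS : ∫ θ, ∫ x, (if Ψ θ ≠ δ x then h (Ψ θ) else 0) ∂(P θ) ∂Pri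
      = ∑' ψ, h ψ * (p ψ - ∫ x in A ψ, q ψ x ∂M) := by
    rw [integral_congr_ae (ae_of_all _ fun θ => hinner (Ψ θ) θ), hsplitInt _ hFint]
    refine tsum_congr fun ψ => ?_
    rw [setIntegral_congr_fun (hTm ψ)
      (fun θ (hθ : Ψ θ = ψ) => by rw [hθ] : ∀ θ ∈ T ψ,
        h (Ψ θ) * (1 - ((P θ) (A (Ψ θ))).toReal) = h ψ * (1 - ((P θ) (A ψ)).toReal)),
      integral_const_mul,
      integral_sub (integrable_const 1) (hPAint ψ).integrableOn,
      setIntegral_const, smul_eq_mul, mul_one, ← hBayes ψ (A ψ) (hAm ψ), hp ψ]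
    rfl
  rw [hLHS, hRHS]
  -- termwise comparison of the two series
  have hIlow : ∀ ψ, p ψ * (M (A ψ)).toReal ≤ ∫ x in A ψ, q ψ x ∂M := by
    intro ψ
    have : ∫ x in A ψ, p ψ ∂M ≤ ∫ x in A ψ, q ψ x ∂M := by
      refine setIntegral_mono_on (integrableOn_const (measure_ne_top _ _))
        ((hqint ψ).integrableOn) (hAm ψ) fun x hx => ?_
      have hx' : δ x = ψ := hx
      rw [← hx']
      exact hkey x
    rwa [setIntegral_const, smul_eq_mul, mul_comm] at this
  have hIup : ∀ ψ, ∫ x in A ψ, q ψ x ∂M ≤ p ψ := fun ψ => by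
    rw [← hqint_val ψ]
    exact setIntegral_le_integral (hqint ψ) (ae_of_all _ fun x => hqnn ψ x)
  have hInn : ∀ ψ, 0 ≤ ∫ x in A ψ, q ψ x ∂M := fun ψ =>
    setIntegral_nonneg (hAm ψ) fun x _ => hqnn ψ x
  have hterm : ∀ ψ, h ψ * (p ψ - ∫ x in A ψ, q ψ x ∂M) ≤ p ψ * g ψ := by
    intro ψ
    have := mul_le_mul_of_nonneg_left (hIlow ψ) (hh ψ)
    simp only [hgdef]
    nlinarith [hh ψ, hIlow ψ]
  have hsum1 : Summable fun ψ => h ψ * (p ψ - ∫ x in A ψ, q ψ x ∂M) := by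
    refine Summable.of_nonneg_of_le
      (fun ψ => mul_nonneg (hh ψ) (by linarith [hIup ψ]))
      (fun ψ => ?_) hhsum
    have := hInn ψ
    have hpn := (hppos ψ).le
    nlinarith [hh ψ]
  have hsum2 : Summable fun ψ => p ψ * g ψ := by
    refine Summable.of_nonneg_of_le
      (fun ψ => mul_nonneg (hppos ψ).le (hgnn ψ))
      (fun ψ => ?_) hhsum
    calc p ψ * g ψ ≤ p ψ * h ψ := mul_le_mul_of_nonneg_left (hgle ψ) (hppos ψ).le
    _ = h ψ * p ψ := mul_comm _ _
  exact Summable.tsum_le_tsum hterm hsum1 hsum2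
end

section
/- Let Θ and 𝒳 be measurable spaces, Π a probability measure on Θ, P a Markov kernel from Θ to 𝒳, ΨT a countable set, Ψ : Θ → ΨT measurable with p(ψ) = Π(Ψ⁻¹{ψ}) > 0 for all ψ, and h : ΨT → [0, ∞) with ∑_ψ h(ψ) p(ψ) < ∞. Let M be the prior predictive measure and q(ψ | x) posterior probability mass functions satisfying the Bayes property ∫_A q(ψ | x) M(dx) = ∫_{Ψ⁻¹{ψ}} P_θ(A) Π(dθ) for every ψ and every measurable A. If δ : 𝒳 → ΨT is measurable and satisfies q(δ(x) | x) ≥ p(δ(x)) for M-almost every x, then δ is Bayesian unbiased for the loss L(θ, a) = 1{Ψ(θ) ≠ a} h(Ψ(θ)): ∫_Θ ∫_Θ ∫_𝒳 L(θ′, δ(x)) P_θ(dx) Π(dθ) Π(dθ′) ≥ ∫_Θ ∫_𝒳 L(θ, δ(x)) P_θ(dx) Π(dθ). -/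
open MeasureTheory ProbabilityTheory
open scoped Classical

/-- In the setting of a proper prior `Pri`, Markov kernel `P`,
countable parameter of interest `Ψ` with marginal prior pmf `p > 0`, loss
`L(θ,a) = 1{Ψ θ ≠ a} h(Ψ θ)` with `∑' ψ, h ψ * p ψ < ∞`, prior predictive `M` and
marginal posterior pmfs `q ψ x` satisfying the Bayes property: any measurable `δ`
with `q (δ x) x ≥ p (δ x)` for `M`-a.e. `x` is Bayesian unbiased. -/
theorem stmt_6 {Θ 𝒳 : Type*} [MeasurableSpace Θ] [MeasurableSpace 𝒳]
    (Pri : Measure Θ) [IsProbabilityMeasure Pri]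
    (P : Kernel Θ 𝒳) [IsMarkovKernel P]
    {ΨT : Type*} [Countable ΨT] [MeasurableSpace ΨT] [MeasurableSingletonClass ΨT]
    (Ψ : Θ → ΨT) (hΨ : Measurable Ψ)
    (p : ΨT → ℝ) (hp : ∀ ψ, p ψ = (Pri (Ψ ⁻¹' {ψ})).toReal)
    (hppos : ∀ ψ, 0 < p ψ)
    (h : ΨT → ℝ) (hh : ∀ ψ, 0 ≤ h ψ) (hhsum : Summable fun ψ => h ψ * p ψ)
    (M : Measure 𝒳)
    (hM : ∀ A : Set 𝒳, MeasurableSet A → M A = ∫⁻ θ, P θ A ∂Pri)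
    (q : ΨT → 𝒳 → ℝ) (hqmeas : ∀ ψ, Measurable (q ψ))
    (hqnn : ∀ ψ x, 0 ≤ q ψ x) (hqsum : ∀ x, ∑' ψ, q ψ x = 1)
    (hBayes : ∀ (ψ : ΨT) (A : Set 𝒳), MeasurableSet A →
      ∫ x in A, q ψ x ∂M = ∫ θ in Ψ ⁻¹' {ψ}, ((P θ) A).toReal ∂Pri)
    (δ : 𝒳 → ΨT) (hδ : Measurable δ)
    (hub : ∀ᵐ x ∂M, p (δ x) ≤ q (δ x) x) :
    ∫ θ, ∫ x, (if Ψ θ ≠ δ x then h (Ψ θ) else 0) ∂(P θ) ∂Pri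
      ≤ ∫ θ', ∫ θ, ∫ x, (if Ψ θ' ≠ δ x then h (Ψ θ') else 0) ∂(P θ) ∂Pri ∂Pri := by
  classical
  set B : ΨT → Set 𝒳 := fun ψ => δ ⁻¹' {ψ} with hBdef
  have hBmeas : ∀ ψ, MeasurableSet (B ψ) := fun ψ => hδ (measurableSet_singleton ψ)
  set S : ΨT → Set Θ := fun ψ => Ψ ⁻¹' {ψ} with hSdef
  have hSmeas : ∀ ψ, MeasurableSet (S ψ) := fun ψ => hΨ (measurableSet_singleton ψ)
  -- M is a probability measure
  have hMuniv : M Set.univ = 1 := by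
    rw [hM _ MeasurableSet.univ]
    simp
  haveI hMP : IsProbabilityMeasure M := ⟨hMuniv⟩
  -- generic inner integral computation
  have hin0 : ∀ (ψ : ΨT) (ν : Measure 𝒳),
      ∫ x, (if ψ ≠ δ x then h ψ else 0) ∂ν = h ψ * (ν ((B ψ)ᶜ)).toReal := by
    intro ψ ν
    have e : (fun x => (if ψ ≠ δ x then h ψ else 0))
        = Set.indicator ((B ψ)ᶜ) (fun _ => h ψ) := by
      funext x
      by_cases hx : δ x = ψ
      · simp [Set.indicator_apply, hBdef, hx]
      · have hx' : ψ ≠ δ x := fun he => hx he.symm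
        simp [Set.indicator_apply, hBdef, hx, hx']
    rw [e, integral_indicator_const _ ((hBmeas ψ).compl), smul_eq_mul, mul_comm]
    rfl
  -- integral of kernel probabilities
  have hMint : ∀ s : Set 𝒳, MeasurableSet s →
      ∫ θ, ((P θ) s).toReal ∂Pri = (M s).toReal := by
    intro s hs
    rw [hM s hs]
    exact integral_toReal (P.measurable_coe hs).aemeasurable
      (ae_of_all _ fun θ => measure_lt_top (P θ) s)
  simp_rw [hin0, integral_const_mul,
    fun θ' => hMint ((B (Ψ θ'))ᶜ) (hBmeas (Ψ θ')).compl]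
  -- the two integrands
  set G : Θ → ℝ := fun θ => h (Ψ θ) * ((P θ) ((B (Ψ θ))ᶜ)).toReal with hGdef
  set H : Θ → ℝ := fun θ => h (Ψ θ) * (M ((B (Ψ θ))ᶜ)).toReal with hHdef
  -- integrability of h ∘ Ψ
  have hmeas_h : Measurable fun θ => h (Ψ θ) := (measurable_of_countable h).comp hΨ
  have hPS : ∀ ψ, Pri (S ψ) = ENNReal.ofReal (p ψ) := fun ψ => by
    rw [hp ψ, ENNReal.ofReal_toReal (measure_ne_top _ _)]
  have hint_h : Integrable (fun θ => h (Ψ θ)) Pri := by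
    refine ⟨hmeas_h.aestronglyMeasurable, ?_⟩
    have e1 : ∀ θ, ‖h (Ψ θ)‖ₑ = ENNReal.ofReal (h (Ψ θ)) := fun θ =>
      Real.enorm_eq_ofReal (hh _)
    rw [HasFiniteIntegral]
    simp_rw [e1]
    rw [← lintegral_map (f := fun ψ => ENNReal.ofReal (h ψ)) (measurable_of_countable _) hΨ,
      lintegral_countable']
    have e2 : ∀ ψ : ΨT, ENNReal.ofReal (h ψ) * (Pri.map Ψ) {ψ}
        = ENNReal.ofReal (h ψ * p ψ) := by
      intro ψ
      rw [Measure.map_apply hΨ (measurableSet_singleton ψ),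
        ENNReal.ofReal_mul (hh ψ)]
      exact congrArg _ (hPS ψ)
    simp_rw [e2]
    rw [← ENNReal.ofReal_tsum_of_nonneg
      (fun ψ => mul_nonneg (hh ψ) (hppos ψ).le) hhsum]
    exact ENNReal.ofReal_lt_top
  -- measurability and integrability of G and H
  have hGmeas : Measurable G := by
    have : Measurable fun pr : Θ × ΨT => h pr.2 * ((P pr.1) ((B pr.2)ᶜ)).toReal :=
      measurable_from_prod_countable_left fun ψ =>
        ((P.measurable_coe (hBmeas ψ).compl).ennreal_toReal).const_mul (h ψ)
    exact this.comp (measurable_id.prodMk hΨ)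
  have htoReal_le_one : ∀ (ν : Measure 𝒳) [IsProbabilityMeasure ν] (s : Set 𝒳),
      (ν s).toReal ≤ 1 := by
    intro ν _ s
    have h1 : (ν s).toReal ≤ ((1 : ENNReal)).toReal :=
      ENNReal.toReal_mono ENNReal.one_ne_top prob_le_one
    simpa using h1
  have hGbd : ∀ θ, ‖G θ‖ ≤ h (Ψ θ) := by
    intro θ
    rw [hGdef, Real.norm_eq_abs, abs_of_nonneg (mul_nonneg (hh _) ENNReal.toReal_nonneg)]
    calc h (Ψ θ) * ((P θ) ((B (Ψ θ))ᶜ)).toReal ≤ h (Ψ θ) * 1 :=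
          mul_le_mul_of_nonneg_left (htoReal_le_one (P θ) _) (hh _)
      _ = h (Ψ θ) := mul_one _
  have hintG : Integrable G Pri :=
    Integrable.mono' hint_h hGmeas.aestronglyMeasurable (ae_of_all _ hGbd)
  have hHmeas : Measurable H :=
    (measurable_of_countable (fun ψ => h ψ * (M ((B ψ)ᶜ)).toReal)).comp hΨ
  have hHbd : ∀ θ, ‖H θ‖ ≤ h (Ψ θ) := by
    intro θ
    rw [hHdef, Real.norm_eq_abs, abs_of_nonneg (mul_nonneg (hh _) ENNReal.toReal_nonneg)]
    calc h (Ψ θ) * (M ((B (Ψ θ))ᶜ)).toReal ≤ h (Ψ θ) * 1 :=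
          mul_le_mul_of_nonneg_left (htoReal_le_one M _) (hh _)
      _ = h (Ψ θ) := mul_one _
  have hintH : Integrable H Pri :=
    Integrable.mono' hint_h hHmeas.aestronglyMeasurable (ae_of_all _ hHbd)
  -- fiber decomposition
  have hUnion : (⋃ ψ, S ψ) = Set.univ := by
    ext θ
    simp [hSdef]
  have hdisj : Pairwise (Function.onFun Disjoint S) := by
    intro ψ ψ' hne
    rw [Function.onFun, Set.disjoint_left]
    intro θ h1 h2
    exact hne ((Set.mem_preimage.mp h1).symm.trans (Set.mem_preimage.mp h2))
  have hsumG : HasSum (fun ψ => ∫ θ in S ψ, G θ ∂Pri) (∫ θ, G θ ∂Pri) := by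
    have hh2 := hasSum_integral_iUnion hSmeas hdisj
      (by rw [hUnion]; exact hintG.integrableOn)
    rwa [hUnion, setIntegral_univ] at hh2
  have hsumH : HasSum (fun ψ => ∫ θ in S ψ, H θ ∂Pri) (∫ θ, H θ ∂Pri) := by
    have hh2 := hasSum_integral_iUnion hSmeas hdisj
      (by rw [hUnion]; exact hintH.integrableOn)
    rwa [hUnion, setIntegral_univ] at hh2
  -- termwise comparison
  have hterm : ∀ ψ, ∫ θ in S ψ, G θ ∂Pri ≤ ∫ θ in S ψ, H θ ∂Pri := by
    intro ψ
    -- facts about q ψ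
    have hqsummable : ∀ x, Summable fun ψ' => q ψ' x := by
      intro x
      by_contra hns
      have h1 := hqsum x
      rw [tsum_eq_zero_of_not_summable hns] at h1
      exact zero_ne_one (α := ℝ) h1
    have hq1 : ∀ x, q ψ x ≤ 1 := by
      intro x
      have := Summable.le_tsum (hqsummable x) ψ (fun ψ' _ => hqnn ψ' x)
      rwa [hqsum x] at this
    have hqint : Integrable (q ψ) M := by
      refine Integrable.mono' (integrable_const 1) (hqmeas ψ).aestronglyMeasurable
        (ae_of_all _ fun x => ?_)
      rw [Real.norm_eq_abs, abs_of_nonneg (hqnn ψ x)]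
      exact hq1 x
    -- evaluate the G-side fiber integral
    have eG : ∫ θ in S ψ, G θ ∂Pri = h ψ * ∫ x in (B ψ)ᶜ, q ψ x ∂M := by
      have e1 : ∫ θ in S ψ, G θ ∂Pri
          = ∫ θ in S ψ, h ψ * ((P θ) ((B ψ)ᶜ)).toReal ∂Pri := by
        refine setIntegral_congr_fun (hSmeas ψ) fun θ hθ => ?_
        have hθψ : Ψ θ = ψ := hθ
        simp [hGdef, hθψ]
      rw [e1, integral_const_mul, ← hBayes ψ _ (hBmeas ψ).compl]
    -- total mass of q ψ
    have hqtot : ∫ x, q ψ x ∂M = p ψ := by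
      have e1 := hBayes ψ Set.univ MeasurableSet.univ
      rw [setIntegral_univ] at e1
      have e2 : ∫ θ in S ψ, ((P θ) Set.univ).toReal ∂Pri
          = ∫ θ in S ψ, (1 : ℝ) ∂Pri := by
        refine setIntegral_congr_fun (hSmeas ψ) fun θ _ => ?_
        simp
      rw [e2, setIntegral_const, smul_eq_mul, mul_one] at e1
      rw [e1, hp]
      rfl
    -- split over B ψ and its complement
    have hsplit : ∫ x in (B ψ)ᶜ, q ψ x ∂M = p ψ - ∫ x in B ψ, q ψ x ∂M := by
      have := integral_add_compl (hBmeas ψ) hqint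
      rw [hqtot] at this
      linarith
    -- lower bound on ∫ over B ψ of q ψ
    have hmono : (M (B ψ)).toReal * p ψ ≤ ∫ x in B ψ, q ψ x ∂M := by
      have e1 : ∫ _ in B ψ, p ψ ∂M = (M (B ψ)).toReal * p ψ := by
        rw [setIntegral_const, smul_eq_mul]
        rfl
      rw [← e1]
      refine integral_mono_ae (integrable_const _).restrict hqint.restrict ?_
      filter_upwards [ae_restrict_of_ae hub, ae_restrict_mem (hBmeas ψ)] with x hx hxB
      have hδx : δ x = ψ := hxB
      rw [← hδx]
      exact hx
    -- evaluate the H-side fiber integral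
    have eH : ∫ θ in S ψ, H θ ∂Pri = p ψ * (h ψ * (M ((B ψ)ᶜ)).toReal) := by
      have e1 : ∫ θ in S ψ, H θ ∂Pri
          = ∫ θ in S ψ, h ψ * (M ((B ψ)ᶜ)).toReal ∂Pri := by
        refine setIntegral_congr_fun (hSmeas ψ) fun θ hθ => ?_
        have hθψ : Ψ θ = ψ := hθ
        simp [hHdef, hθψ]
      rw [e1, setIntegral_const, smul_eq_mul, Measure.real, ← hp]
    -- complement mass
    have hcompl : (M ((B ψ)ᶜ)).toReal = 1 - (M (B ψ)).toReal := by
      rw [prob_compl_eq_one_sub (hBmeas ψ),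
        ENNReal.toReal_sub_of_le prob_le_one ENNReal.one_ne_top]
      simp
    rw [eG, eH, hsplit, hcompl]
    have hm0 : (0 : ℝ) ≤ (M (B ψ)).toReal := ENNReal.toReal_nonneg
    nlinarith [mul_le_mul_of_nonneg_left hmono (hh ψ), (hppos ψ).le, hh ψ]
  exact hasSum_le hterm hsumG hsumH
end

section
/- Let q : ℝ^k → ℝ be a continuous probability density with respect to Lebesgue measure and let Π_post denote the corresponding probability measure, Π_post(A) = ∫_A q. Let ψ_M ∈ ℝ^k and λ > 0 be such that for every ψ with ‖ψ − ψ_M‖ > λ one has q(ψ) < inf_{‖ζ − ψ_M‖ ≤ λ} q(ζ). Then any δ ∈ ℝ^k that maximizes ψ ↦ Π_post(closed ball of radius λ centered at ψ) satisfies ‖δ − ψ_M‖ ≤ 2λ. (Hence the posterior mode ψ_MAP, under this separation condition, is a limit of Bayes rules for the losses L_λ(θ, ψ) = 1{Ψ(θ) ∉ B_λ(ψ)} as λ → 0.) -/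
open MeasureTheory Metric

/-- Let `q` be a continuous probability density on `ℝ^k` with
associated measure `Π_post = volume.withDensity (ofReal ∘ q)`. If `ψ_M` and `λ > 0`
are such that `q ψ < inf_{‖ζ - ψ_M‖ ≤ λ} q ζ` whenever `‖ψ - ψ_M‖ > λ`, then any `δ`
maximizing `ψ ↦ Π_post(closedBall ψ λ)` satisfies `‖δ - ψ_M‖ ≤ 2λ`. -/
theorem stmt_11 {k : ℕ} (q : EuclideanSpace ℝ (Fin k) → ℝ)
    (hqc : Continuous q) (hqnn : ∀ x, 0 ≤ q x)
    (Post : Measure (EuclideanSpace ℝ (Fin k)))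
    (hPost : Post = volume.withDensity fun x => ENNReal.ofReal (q x))
    (hq1 : IsProbabilityMeasure Post)
    (ψM : EuclideanSpace ℝ (Fin k)) (lam : ℝ) (hlam : 0 < lam)
    (hsep : ∀ ψ, lam < ‖ψ - ψM‖ → q ψ < sInf (q '' closedBall ψM lam)) :
    ∀ δ : EuclideanSpace ℝ (Fin k),
      (∀ ψ, Post (closedBall ψ lam) ≤ Post (closedBall δ lam)) →
      ‖δ - ψM‖ ≤ 2 * lam := by
  intro δ hδ
  by_contra hfar
  push_neg at hfar
  set m : ℝ := sInf (q '' closedBall ψM lam) with hm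
  have hlamδ : lam < ‖δ - ψM‖ := lt_of_le_of_lt (by linarith) hfar
  have hm0 : 0 < m := lt_of_le_of_lt (hqnn δ) (hsep δ hlamδ)
  -- q attains a maximum M on closedBall δ lam, and M < m
  have hne : (closedBall δ lam).Nonempty := nonempty_closedBall.mpr hlam.le
  obtain ⟨x0, hx0mem, hx0max⟩ :=
    (isCompact_closedBall δ lam).exists_isMaxOn hne hqc.continuousOn
  set M : ℝ := q x0 with hM
  have hx0far : lam < ‖x0 - ψM‖ := by
    have h1 : ‖δ - x0‖ ≤ lam := by
      rw [mem_closedBall, dist_eq_norm] at hx0mem; rwa [norm_sub_rev]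
    have h2 : ‖δ - ψM‖ ≤ ‖δ - x0‖ + ‖x0 - ψM‖ := by
      have := norm_add_le (δ - x0) (x0 - ψM)
      simpa using this
    linarith
  have hMm : M < m := hsep x0 hx0far
  -- lower bound for q on closedBall ψM lam
  have hbdd : BddBelow (q '' closedBall ψM lam) := ⟨0, by rintro y ⟨x, -, rfl⟩; exact hqnn x⟩
  have hlow : ∀ x ∈ closedBall ψM lam, m ≤ q x := fun x hx => csInf_le hbdd ⟨x, hx, rfl⟩
  -- measures of the balls
  have hvol : volume (closedBall δ lam) = volume (closedBall ψM lam) := by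
    rw [Measure.addHaar_closedBall_center volume δ, Measure.addHaar_closedBall_center volume ψM]
  have hvpos : 0 < volume (closedBall ψM lam) := measure_closedBall_pos volume ψM hlam
  have hvtop : volume (closedBall ψM lam) ≠ ⊤ := measure_closedBall_lt_top.ne
  -- Post of the two balls
  have hPδ : Post (closedBall δ lam) ≤ ENNReal.ofReal M * volume (closedBall ψM lam) := by
    rw [hPost, withDensity_apply _ measurableSet_closedBall, ← hvol,
      ← setLIntegral_const (closedBall δ lam) (ENNReal.ofReal M)]
    exact setLIntegral_mono' measurableSet_closedBall fun x hx =>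
      ENNReal.ofReal_le_ofReal (hx0max hx)
  have hPψ : ENNReal.ofReal m * volume (closedBall ψM lam) ≤ Post (closedBall ψM lam) := by
    rw [hPost, withDensity_apply _ measurableSet_closedBall,
      ← setLIntegral_const (closedBall ψM lam) (ENNReal.ofReal m)]
    exact setLIntegral_mono' measurableSet_closedBall fun x hx =>
      ENNReal.ofReal_le_ofReal (hlow x hx)
  have hlt : ENNReal.ofReal M * volume (closedBall ψM lam)
      < ENNReal.ofReal m * volume (closedBall ψM lam) := by
    exact (ENNReal.mul_lt_mul_iff_left hvpos.ne' hvtop).mpr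
      ((ENNReal.ofReal_lt_ofReal_iff hm0).mpr hMm)
  exact absurd (hδ ψM) (not_le.mpr (lt_of_lt_of_le (lt_of_le_of_lt hPδ hlt) hPψ))
end

section
/- Let Ψ be a finite set, p : Ψ → ℝ the prior probability mass function with p(ψ) > 0 for all ψ and ∑_ψ p(ψ) = 1, q : Ψ → ℝ the posterior probability mass function with q(ψ) ≥ 0 and ∑_ψ q(ψ) = 1, and let γ ∈ (0, 1]. For the loss L(ψ, a) = 1{ψ ≠ a}/p(ψ), the posterior risk of a is r(a) = ∑_ψ q(ψ)/p(ψ) − q(a)/p(a). Define the γ-lowest posterior loss region L_γ = {ψ : r(ψ) ≤ l_γ} where l_γ = inf{k : ∑_{ψ : r(ψ) ≤ k} q(ψ) ≥ γ}, and the γ-relative surprise region C_γ = {ψ : q(ψ)/p(ψ) ≥ c_γ} where c_γ = sup{k : ∑_{ψ : q(ψ)/p(ψ) ≥ k} q(ψ) ≥ γ}. Then L_γ = C_γ. -/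
/-- **Theorem 8.** For finite `Ψ` with prior pmf `p > 0`, posterior
pmf `q` and `γ ∈ (0,1]`, under the loss `L(ψ,a) = 1{ψ ≠ a}/p ψ` the posterior risk is
`r a = ∑ ψ, q ψ / p ψ - q a / p a`; the `γ`-lowest posterior loss region
`{ψ : r ψ ≤ l_γ}` coincides with the `γ`-relative surprise region
`{ψ : q ψ / p ψ ≥ c_γ}`. -/
theorem stmt_12 {Ψ : Type*} [Fintype Ψ] (p q : Ψ → ℝ)
    (hp : ∀ ψ, 0 < p ψ) (hp1 : ∑ ψ, p ψ = 1)
    (hq : ∀ ψ, 0 ≤ q ψ) (hq1 : ∑ ψ, q ψ = 1)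
    (γ : ℝ) (hγ : 0 < γ) (hγ1 : γ ≤ 1)
    (r : Ψ → ℝ) (hr : ∀ a, r a = (∑ ψ, q ψ / p ψ) - q a / p a)
    (Q : Set Ψ → ℝ) (hQ : ∀ S, Q S = ∑ ψ, S.indicator q ψ)
    (lγ : ℝ) (hl : lγ = sInf {k : ℝ | γ ≤ Q {ψ | r ψ ≤ k}})
    (cγ : ℝ) (hc : cγ = sSup {k : ℝ | γ ≤ Q {ψ | k ≤ q ψ / p ψ}}) :
    {ψ | r ψ ≤ lγ} = {ψ | cγ ≤ q ψ / p ψ} := by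
  have hne : Nonempty Ψ := by
    by_contra h
    rw [not_nonempty_iff] at h
    rw [Finset.univ_eq_empty, Finset.sum_empty] at hp1
    norm_num at hp1
  set T : ℝ := ∑ ψ, q ψ / p ψ with hT
  have hreq : ∀ (ψ : Ψ) (k : ℝ), r ψ ≤ k ↔ T - k ≤ q ψ / p ψ := by
    intro ψ k
    rw [hr]
    constructor <;> intro <;> linarith
  set B : Set ℝ := {k : ℝ | γ ≤ Q {ψ | k ≤ q ψ / p ψ}} with hB
  set A : Set ℝ := {k : ℝ | γ ≤ Q {ψ | r ψ ≤ k}} with hA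
  have hAB : ∀ k, k ∈ A ↔ (T - k) ∈ B := by
    intro k
    simp only [hA, hB, Set.mem_setOf_eq]
    have hset : {ψ | r ψ ≤ k} = {ψ | T - k ≤ q ψ / p ψ} := by
      ext ψ; exact hreq ψ k
    rw [hset]
  obtain ⟨ψ₀, -, hψ₀⟩ := Finset.exists_min_image Finset.univ (fun ψ => q ψ / p ψ)
    ⟨Classical.arbitrary Ψ, Finset.mem_univ _⟩
  obtain ⟨ψ₁, -, hψ₁⟩ := Finset.exists_max_image Finset.univ (fun ψ => q ψ / p ψ)
    ⟨Classical.arbitrary Ψ, Finset.mem_univ _⟩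
  have hBne : q ψ₀ / p ψ₀ ∈ B := by
    simp only [hB, Set.mem_setOf_eq, hQ]
    have hind : ∀ ψ ∈ (Finset.univ : Finset Ψ),
        ({ψ | q ψ₀ / p ψ₀ ≤ q ψ / p ψ} : Set Ψ).indicator q ψ = q ψ := by
      intro ψ _
      rw [Set.indicator_of_mem]
      exact hψ₀ ψ (Finset.mem_univ ψ)
    rw [Finset.sum_congr rfl hind, hq1]
    exact hγ1
  have hBub : ∀ k ∈ B, k ≤ q ψ₁ / p ψ₁ := by
    intro k hk
    by_contra h
    push_neg at h
    have hempty : {ψ | k ≤ q ψ / p ψ} = (∅ : Set Ψ) := by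
      ext ψ
      simp only [Set.mem_setOf_eq, Set.mem_empty_iff_false, iff_false, not_le]
      exact lt_of_le_of_lt (hψ₁ ψ (Finset.mem_univ ψ)) h
    have hQ0 : Q {ψ | k ≤ q ψ / p ψ} = 0 := by
      rw [hempty, hQ]; simp
    rw [hB, Set.mem_setOf_eq, hQ0] at hk
    linarith
  have hBbdd : BddAbove B := ⟨q ψ₁ / p ψ₁, hBub⟩
  have hAne : (T - q ψ₀ / p ψ₀) ∈ A := by
    rw [hAB]
    simpa using hBne
  have hAbdd : BddBelow A := by
    refine ⟨T - q ψ₁ / p ψ₁, fun k hk => ?_⟩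
    have := hBub _ ((hAB k).1 hk)
    linarith
  have hlc : lγ = T - cγ := by
    rw [hl, hc]
    apply le_antisymm
    · have h1 : ∀ b ∈ B, b ≤ T - sInf A := by
        intro b hb
        have hmem : (T - b) ∈ A := by
          rw [hAB]; simpa using hb
        have := csInf_le hAbdd hmem
        linarith
      have := csSup_le ⟨_, hBne⟩ h1
      linarith
    · refine le_csInf ⟨_, hAne⟩ fun a ha => ?_
      have := le_csSup hBbdd ((hAB a).1 ha)
      linarith
  ext ψ
  simp only [Set.mem_setOf_eq]
  rw [hreq ψ lγ, hlc]
  constructor <;> intro <;> linarith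
end

section
/- Let Ψ be a countable set, p : Ψ → ℝ the prior probability mass function with p(ψ) > 0 for all ψ and ∑_ψ p(ψ) = 1, q : Ψ → ℝ the posterior probability mass function with q(ψ) ≥ 0 and ∑_ψ q(ψ) = 1, and γ ∈ (0, 1]. For c ≥ 0 and η > 0 define S_c = {ψ : q(ψ)/p(ψ) ≥ c}, S_{η,c} = {ψ : q(ψ)/max(η, p(ψ)) ≥ c}, Q(S) = ∑_{ψ ∈ S} q(ψ), the γ-relative surprise region C_γ = S_{c_γ} with c_γ = sup{k : Q(S_k) ≥ γ}, and the γ-lowest posterior loss region L_{η,γ} = S_{η, l_{η,γ}} with l_{η,γ} = sup{k : Q(S_{η,k}) ≥ γ}. If Q(C_γ) = γ, then C_γ ⊆ liminf_{η → 0} L_{η,γ}; i.e., for every ψ ∈ C_γ there is η₀ > 0 such that ψ ∈ L_{η,γ} for all 0 < η < η₀. -/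
/-- **Theorem 9, first part.** For countable `Ψ`, prior pmf `p > 0`,
posterior pmf `q`, `γ ∈ (0,1]`, with `S_c = {ψ : q ψ/p ψ ≥ c}`,
`S_{η,c} = {ψ : q ψ/max(η, p ψ) ≥ c}`, `Q S = ∑'_{ψ ∈ S} q ψ`, the `γ`-relative
surprise region `C_γ = S_{c_γ}` and the `γ`-lowest posterior loss regions
`L_{η,γ} = S_{η, l_{η,γ}}`: if `Q C_γ = γ`, then `C_γ ⊆ liminf_{η → 0} L_{η,γ}`,
i.e. each `ψ ∈ C_γ` lies in `L_{η,γ}` for all sufficiently small `η > 0`. -/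
theorem stmt_13 {Ψ : Type*} [Countable Ψ] (p q : Ψ → ℝ)
    (hp : ∀ ψ, 0 < p ψ) (hp1 : ∑' ψ, p ψ = 1)
    (hq : ∀ ψ, 0 ≤ q ψ) (hq1 : ∑' ψ, q ψ = 1)
    (γ : ℝ) (hγ : 0 < γ) (hγ1 : γ ≤ 1)
    (Q : Set Ψ → ℝ) (hQ : ∀ S, Q S = ∑' ψ, S.indicator q ψ)
    (S : ℝ → Set Ψ) (hS : ∀ c, S c = {ψ | c ≤ q ψ / p ψ})
    (Sη : ℝ → ℝ → Set Ψ) (hSη : ∀ η c, Sη η c = {ψ | c ≤ q ψ / max η (p ψ)})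
    (cγ : ℝ) (hc : cγ = sSup {k : ℝ | γ ≤ Q (S k)})
    (Cγ : Set Ψ) (hC : Cγ = S cγ)
    (l : ℝ → ℝ) (hl : ∀ η, l η = sSup {k : ℝ | γ ≤ Q (Sη η k)})
    (L : ℝ → Set Ψ) (hL : ∀ η, L η = Sη η (l η))
    (hexact : Q Cγ = γ) :
    ∀ ψ ∈ Cγ, ∃ η₀ > 0, ∀ η, 0 < η → η < η₀ → ψ ∈ L η := by
  intro ψ₀ hψ₀
  have hsq : Summable q := by
    by_contra h
    rw [tsum_eq_zero_of_not_summable h] at hq1; norm_num at hq1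
  have hsub : ∀ η k, Sη η k ⊆ S k := by
    intro η k x hx
    rw [hSη] at hx; rw [hS]
    exact le_trans hx (div_le_div_of_nonneg_left (hq x) (hp x) (le_max_right _ _))
  have hQmono : ∀ (A B : Set Ψ), A ⊆ B → Q A ≤ Q B := by
    intro A B hAB
    rw [hQ, hQ]
    exact Summable.tsum_le_tsum (fun x => Set.indicator_le_indicator_of_subset hAB hq x)
      (hsq.indicator _) (hsq.indicator _)
  obtain ⟨F, hF⟩ : ∃ F : Finset Ψ, 1 - γ < ∑ ψ ∈ F, q ψ := by
    have h1 : HasSum q 1 := (Summable.hasSum_iff hsq).2 hq1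
    exact (h1.eventually (eventually_gt_nhds (by linarith : 1 - γ < 1))).exists
  set M := ∑ ψ ∈ F, q ψ / p ψ with hM
  have hbdd : ∀ k, γ ≤ Q (S k) → k ≤ M := by
    intro k hk
    by_contra hkM
    push_neg at hkM
    have hSkF : S k ⊆ (↑F : Set Ψ)ᶜ := by
      intro x hx hxF
      rw [hS] at hx
      have hxM : q x / p x ≤ M :=
        Finset.single_le_sum (fun ψ _ => div_nonneg (hq ψ) (hp ψ).le) hxF
      simp only [Set.mem_setOf_eq] at hx
      linarith
    have h1 : Q (S k) ≤ Q ((↑F : Set Ψ)ᶜ) := hQmono _ _ hSkF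
    have h2 : Q ((↑F : Set Ψ)ᶜ) = 1 - ∑ ψ ∈ F, q ψ := by
      rw [hQ, ← tsum_subtype]
      have h3 := Summable.sum_add_tsum_compl (s := F) hsq
      rw [hq1] at h3
      linarith
    linarith
  have hbddA : BddAbove {k : ℝ | γ ≤ Q (S k)} := ⟨M, fun k hk => hbdd k hk⟩
  have hc0 : 0 ≤ cγ := by
    rw [hc]
    apply le_csSup hbddA
    have hS0 : S 0 = Set.univ := by
      rw [hS]; ext x; simp [div_nonneg (hq x) (hp x).le]
    show γ ≤ Q (S 0)
    rw [hS0, hQ]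
    simp only [Set.indicator_univ]
    rw [hq1]; exact hγ1
  have hlc : ∀ η, l η ≤ cγ := by
    intro η
    rw [hl]
    apply Real.sSup_le _ hc0
    intro k hk
    rw [hc]
    exact le_csSup hbddA (le_trans hk (hQmono _ _ (hsub η k)))
  refine ⟨p ψ₀, hp ψ₀, fun η hη hηp => ?_⟩
  rw [hL, hSη]
  show l η ≤ q ψ₀ / max η (p ψ₀)
  rw [max_eq_right hηp.le]
  rw [hC, hS] at hψ₀
  exact le_trans (hlc η) hψ₀
end

section
/- Let Ψ be a countable set, p : Ψ → ℝ the prior probability mass function with p(ψ) > 0 for all ψ and ∑_ψ p(ψ) = 1, q : Ψ → ℝ the posterior probability mass function with q(ψ) ≥ 0 and ∑_ψ q(ψ) = 1, and 0 < γ < γ′ ≤ 1. With S_c = {ψ : q(ψ)/p(ψ) ≥ c}, S_{η,c} = {ψ : q(ψ)/max(η, p(ψ)) ≥ c}, Q(S) = ∑_{ψ ∈ S} q(ψ), C_{γ′} = S_{c_{γ′}} where c_{γ′} = sup{k : Q(S_k) ≥ γ′}, and L_{η,γ} = S_{η, l_{η,γ}} where l_{η,γ} = sup{k : Q(S_{η,k})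 ≥ γ}: if Q(C_{γ′}) = γ′, then limsup_{η → 0} L_{η,γ} ⊆ C_{γ′}; i.e., for every ψ ∉ C_{γ′} there is η₀ > 0 such that ψ ∉ L_{η,γ} for all 0 < η < η₀. -/
/-- **Theorem 9, second part.** For countable `Ψ`, prior pmf `p > 0`,
posterior pmf `q`, and `0 < γ < γ' ≤ 1`, with `S_c = {ψ : q ψ/p ψ ≥ c}`,
`S_{η,c} = {ψ : q ψ/max(η, p ψ) ≥ c}`, `Q S = ∑'_{ψ ∈ S} q ψ`, the `γ'`-relative
surprise region `C_{γ'} = S_{c_{γ'}}` and the `γ`-lowest posterior loss regions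
`L_{η,γ} = S_{η, l_{η,γ}}`: if `Q C_{γ'} = γ'`, then
`limsup_{η → 0} L_{η,γ} ⊆ C_{γ'}`, i.e. each `ψ ∉ C_{γ'}` is outside `L_{η,γ}` for
all sufficiently small `η > 0`. -/
theorem stmt_14 {Ψ : Type*} [Countable Ψ] (p q : Ψ → ℝ)
    (hp : ∀ ψ, 0 < p ψ) (hp1 : ∑' ψ, p ψ = 1)
    (hq : ∀ ψ, 0 ≤ q ψ) (hq1 : ∑' ψ, q ψ = 1)
    (γ γ' : ℝ) (hγ : 0 < γ) (hγγ' : γ < γ') (hγ'1 : γ' ≤ 1)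
    (Q : Set Ψ → ℝ) (hQ : ∀ S, Q S = ∑' ψ, S.indicator q ψ)
    (S : ℝ → Set Ψ) (hS : ∀ c, S c = {ψ | c ≤ q ψ / p ψ})
    (Sη : ℝ → ℝ → Set Ψ) (hSη : ∀ η c, Sη η c = {ψ | c ≤ q ψ / max η (p ψ)})
    (cγ' : ℝ) (hc : cγ' = sSup {k : ℝ | γ' ≤ Q (S k)})
    (Cγ' : Set Ψ) (hC : Cγ' = S cγ')
    (l : ℝ → ℝ) (hl : ∀ η, l η = sSup {k : ℝ | γ ≤ Q (Sη η k)})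
    (L : ℝ → Set Ψ) (hL : ∀ η, L η = Sη η (l η))
    (hexact : Q Cγ' = γ') :
    ∀ ψ, ψ ∉ Cγ' → ∃ η₀ > 0, ∀ η, 0 < η → η < η₀ → ψ ∉ L η := by
  intro ψ₀ hψ₀
  have hqsum : Summable q := by
    by_contra h
    rw [tsum_eq_zero_of_not_summable h] at hq1
    norm_num at hq1
  have hqle1 : ∀ ψ, q ψ ≤ 1 := by
    intro ψ
    rw [← hq1]
    exact Summable.le_tsum hqsum ψ (fun _ _ => hq _)
  -- monotonicity of Q
  have hQmono : ∀ T T' : Set Ψ, T ⊆ T' → Q T ≤ Q T' := by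
    intro T T' hTT
    rw [hQ, hQ]
    exact Summable.tsum_le_tsum (fun ψ => Set.indicator_le_indicator_of_subset hTT hq ψ)
      (hqsum.indicator T) (hqsum.indicator T')
  set r := q ψ₀ / p ψ₀ with hr_def
  have hr0 : 0 ≤ r := div_nonneg (hq ψ₀) (hp ψ₀).le
  have hr : r < cγ' := by
    rw [hC, hS] at hψ₀
    exact lt_of_not_ge hψ₀
  set k := (r + cγ') / 2 with hk_def
  have hk1 : r < k := by rw [hk_def]; linarith
  have hk2 : k < cγ' := by rw [hk_def]; linarith
  -- the defining set for cγ' is nonempty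
  have hne : {k : ℝ | γ' ≤ Q (S k)}.Nonempty := by
    by_contra h
    rw [Set.not_nonempty_iff_eq_empty] at h
    rw [h, Real.sSup_empty] at hc
    linarith [hr0, hr, hc]
  obtain ⟨k'', hk''mem, hkk''⟩ := exists_lt_of_lt_csSup hne (hc ▸ hk2)
  have hQSk : γ' ≤ Q (S k) := by
    refine le_trans hk''mem (hQmono _ _ ?_)
    rw [hS, hS]
    intro ψ hψ
    exact le_trans hkk''.le hψ
  have hγQ : γ < Q (S k) := lt_of_lt_of_le hγγ' hQSk
  -- find a finite subset with sum > γ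
  have hhs : HasSum ((S k).indicator q) (Q (S k)) := by
    rw [hQ]; exact (hqsum.indicator _).hasSum
  have hev : ∀ᶠ (F : Finset Ψ) in Filter.atTop,
      γ < ∑ ψ ∈ F, (S k).indicator q ψ := hhs.eventually (eventually_gt_nhds hγQ)
  obtain ⟨F, hF⟩ := hev.exists
  have hFne : F.Nonempty := by
    rcases Finset.eq_empty_or_nonempty F with h | h
    · rw [h] at hF; simp at hF; linarith
    · exact h
  refine ⟨F.inf' hFne p, ?_, ?_⟩
  · rw [gt_iff_lt, Finset.lt_inf'_iff]
    exact fun ψ _ => hp ψ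
  intro η hη hηlt
  -- key: k ≤ l η
  have hkle : k ≤ l η := by
    rw [hl]
    apply le_csSup
    · -- bounded above by 1/η
      refine ⟨1 / η, fun k' hk' => ?_⟩
      by_contra hk'gt
      push_neg at hk'gt
      have hempty : Sη η k' = ∅ := by
        rw [hSη]
        ext ψ
        simp only [Set.mem_setOf_eq, Set.mem_empty_iff_false, iff_false, not_le]
        calc q ψ / max η (p ψ) ≤ q ψ / η := by
              gcongr
              · exact hq ψ
              · exact le_max_left _ _
          _ ≤ 1 / η := by gcongr; exact hqle1 ψ
          _ < k' := hk'gt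
      simp only [Set.mem_setOf_eq] at hk'
      rw [hempty, hQ] at hk'
      simp at hk'
      linarith
    · -- membership: γ ≤ Q (Sη η k)
      show γ ≤ Q (Sη η k)
      calc γ ≤ ∑ ψ ∈ F, (S k).indicator q ψ := hF.le
        _ ≤ ∑ ψ ∈ F, (Sη η k).indicator q ψ := by
            apply Finset.sum_le_sum
            intro ψ hψF
            by_cases hmem : ψ ∈ S k
            · have hpψ : η ≤ p ψ := le_of_lt (lt_of_lt_of_le hηlt (Finset.inf'_le p hψF))
              have hmem' : ψ ∈ Sη η k := by
                rw [hSη]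
                rw [hS] at hmem
                simpa [max_eq_right hpψ] using hmem
              rw [Set.indicator_of_mem hmem, Set.indicator_of_mem hmem']
            · rw [Set.indicator_of_notMem hmem]
              exact Set.indicator_nonneg (fun ψ' _ => hq ψ') ψ
        _ ≤ Q (Sη η k) := by
            rw [hQ]
            exact Summable.sum_le_tsum F (fun ψ _ => Set.indicator_nonneg (fun ψ' _ => hq ψ') ψ)
              (hqsum.indicator _)
  -- conclude ψ₀ ∉ L η
  rw [hL, hSη]
  simp only [Set.mem_setOf_eq, not_le]
  calc q ψ₀ / max η (p ψ₀) ≤ q ψ₀ / p ψ₀ := by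
        gcongr
        · exact hq ψ₀
        · exact hp ψ₀
        · exact le_max_right _ _
    _ < k := hk1
    _ ≤ l η := hkle
end

section
/- Let Ψ be an open subset of ℝ^k with ν Lebesgue measure and the prior Π and posterior Π_post probability measures on Ψ with densities p and q with respect to ν, p continuous and strictly positive. Suppose {B_λ(ψ) : ψ ∈ Ψ} is a regular discretization of Ψ for each λ > 0 and that for every ψ ∈ Ψ, Π_post(B_λ(ψ))/Π(B_λ(ψ)) → q(ψ)/p(ψ) as λ → 0. Fix c > 0 with Π_post({ψ : q(ψ)/p(ψ) = c}) = 0, and define S_c = {ψ : q(ψ)/p(ψ) ≥ c} and S_{λ,c} = {ψ : Π_post(B_λ(ψ))/Π(B_λ(ψ)) ≥ c}. Then Π_post(S_{λ,c} Δ S_c) → 0 as λ → 0, where Δ denotes symmetric difference. -/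
open MeasureTheory Filter
open scoped Topology symmDiff

/-- A regular discretization of `Ψ`: for each `λ > 0`, each `ψ ∈ Ψ` lies in its
measurable cell `B λ ψ ⊆ Ψ`, the cells form a countable partition of `Ψ`, every cell
has positive prior measure, and the supremum of the cell diameters tends to `0`. -/
structure IsRegularDiscretization {E : Type*} [MeasurableSpace E] [PseudoMetricSpace E]
    (Ψ : Set E) (Pri : MeasureTheory.Measure E) (B : ℝ → E → Set E) : Prop where
  mem_cell : ∀ ⦃l : ℝ⦄, 0 < l → ∀ ψ ∈ Ψ, ψ ∈ B l ψ
  measurable_cell : ∀ ⦃l : ℝ⦄, 0 < l → ∀ ψ ∈ Ψ, MeasurableSet (B l ψ)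
  cell_subset : ∀ ⦃l : ℝ⦄, 0 < l → ∀ ψ ∈ Ψ, B l ψ ⊆ Ψ
  partition : ∀ ⦃l : ℝ⦄, 0 < l → ∀ ψ ∈ Ψ, ∀ ψ' ∈ Ψ, ψ' ∈ B l ψ → B l ψ' = B l ψ
  countable_cells : ∀ ⦃l : ℝ⦄, 0 < l → Set.Countable (B l '' Ψ)
  pos_prior : ∀ ⦃l : ℝ⦄, 0 < l → ∀ ψ ∈ Ψ, 0 < Pri (B l ψ)
  diam_small : ∀ ε : ℝ, 0 < ε →
    ∃ l₀ > 0, ∀ l, 0 < l → l < l₀ → ∀ ψ ∈ Ψ, Metric.diam (B l ψ) < ε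

/-- Under a regular discretization of `Ψ`, with the discretized
relative belief ratios converging pointwise to `q/p`, for any `c > 0` whose level set
`{q/p = c}` is posterior null, the sets `S_{λ,c} = {ψ : Π_post(B_λ ψ)/Π(B_λ ψ) ≥ c}`
converge to `S_c = {ψ : q ψ/p ψ ≥ c}` in posterior measure of the symmetric
difference. -/
theorem stmt_15 {k : ℕ} (Ψ : Set (EuclideanSpace ℝ (Fin k))) (hΨopen : IsOpen Ψ)
    (p q : EuclideanSpace ℝ (Fin k) → ℝ)
    (hpc : Continuous p) (hppos : ∀ x, 0 < p x)
    (hqm : Measurable q) (hqnn : ∀ x, 0 ≤ q x)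
    (Pri Post : Measure (EuclideanSpace ℝ (Fin k)))
    [IsProbabilityMeasure Pri] [IsProbabilityMeasure Post]
    (hPri : Pri = (volume.restrict Ψ).withDensity fun x => ENNReal.ofReal (p x))
    (hPost : Post = (volume.restrict Ψ).withDensity fun x => ENNReal.ofReal (q x))
    (B : ℝ → EuclideanSpace ℝ (Fin k) → Set (EuclideanSpace ℝ (Fin k)))
    (hB : IsRegularDiscretization Ψ Pri B)
    (hconv : ∀ ψ ∈ Ψ,
      Tendsto (fun l => (Post (B l ψ)).toReal / (Pri (B l ψ)).toReal)
        (𝓝[>] 0) (𝓝 (q ψ / p ψ)))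
    (c : ℝ) (hc : 0 < c)
    (hnull : Post {ψ ∈ Ψ | q ψ / p ψ = c} = 0)
    (Sc : Set (EuclideanSpace ℝ (Fin k)))
    (hSc : Sc = {ψ ∈ Ψ | c ≤ q ψ / p ψ})
    (Sl : ℝ → Set (EuclideanSpace ℝ (Fin k)))
    (hSl : ∀ l, Sl l = {ψ ∈ Ψ | c ≤ (Post (B l ψ)).toReal / (Pri (B l ψ)).toReal}) :
    Tendsto (fun l => Post (Sl l ∆ Sc)) (𝓝[>] 0) (𝓝 0) := by
  -- Sc is measurable
  have hScm : MeasurableSet Sc := by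
    rw [hSc]
    exact hΨopen.measurableSet.inter
      (measurableSet_le measurable_const (hqm.div hpc.measurable))
  -- Sl l is measurable for l > 0
  have hSlm : ∀ l : ℝ, 0 < l → MeasurableSet (Sl l) := by
    intro l hl
    have key : Sl l = ⋃₀ (B l '' {ψ ∈ Ψ | c ≤ (Post (B l ψ)).toReal / (Pri (B l ψ)).toReal}) := by
      ext x
      constructor
      · intro hx
        rw [hSl] at hx
        exact ⟨B l x, ⟨x, hx, rfl⟩, hB.mem_cell hl x hx.1⟩
      · rintro ⟨_, ⟨ψ, hψ, rfl⟩, hx⟩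
        have hxΨ : x ∈ Ψ := hB.cell_subset hl ψ hψ.1 hx
        have hBB : B l x = B l ψ := hB.partition hl ψ hψ.1 x hxΨ hx
        rw [hSl]
        exact ⟨hxΨ, by rw [hBB]; exact hψ.2⟩
    rw [key]
    refine MeasurableSet.sUnion ((hB.countable_cells hl).mono (Set.image_mono ?_)) ?_
    · exact fun ψ hψ => hψ.1
    · rintro t ⟨ψ, hψ, rfl⟩
      exact hB.measurable_cell hl ψ hψ.1
  -- Post is null outside Ψ
  have hPostΨc : Post Ψᶜ = 0 := by
    refine hPost ▸ withDensity_absolutelyContinuous _ _ ?_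
    rw [Measure.restrict_apply hΨopen.measurableSet.compl]
    simp
  set As : ℝ → Set (EuclideanSpace ℝ (Fin k)) :=
    fun l => if 0 < l then Sl l ∆ Sc else ∅ with hAs
  have hAsm : ∀ l, MeasurableSet (As l) := by
    intro l
    by_cases hl : 0 < l
    · simpa [hAs, hl] using (hSlm l hl).symmDiff hScm
    · simp [hAs, hl]
  have key : ∀ x, x ∈ Ψ → q x / p x ≠ c → ∀ᶠ l in 𝓝[>] (0:ℝ), x ∉ As l := by
    intro x hxΨ hne
    rcases hne.lt_or_gt with hlt | hgt
    · have hxSc : x ∉ Sc := by rw [hSc]; exact fun h => absurd h.2 (not_le.mpr hlt)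
      filter_upwards [self_mem_nhdsWithin,
        (hconv x hxΨ).eventually_lt_const hlt] with l hl hratio
      simp only [hAs, if_pos (Set.mem_Ioi.mp hl)]
      rw [Set.mem_symmDiff]
      rintro (⟨hmem, -⟩ | ⟨hmem, -⟩)
      · rw [hSl] at hmem; exact absurd hmem.2 (not_le.mpr hratio)
      · exact hxSc hmem
    · have hxSc : x ∈ Sc := by rw [hSc]; exact ⟨hxΨ, le_of_lt hgt⟩
      filter_upwards [self_mem_nhdsWithin,
        (hconv x hxΨ).eventually_const_lt hgt] with l hl hratio
      simp only [hAs, if_pos (Set.mem_Ioi.mp hl)]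
      rw [Set.mem_symmDiff]
      rintro (⟨-, hmem⟩ | ⟨-, hmem⟩)
      · exact hmem hxSc
      · rw [hSl] at hmem
        exact hmem ⟨hxΨ, le_of_lt hratio⟩
  have hae : ∀ᵐ x ∂Post, ∀ᶠ l in 𝓝[>] (0:ℝ),
      x ∈ As l ↔ x ∈ (∅ : Set (EuclideanSpace ℝ (Fin k))) := by
    have hN : Post (Ψᶜ ∪ {ψ ∈ Ψ | q ψ / p ψ = c}) = 0 :=
      le_antisymm (le_trans (measure_union_le _ _) (by rw [hPostΨc, hnull]; simp)) zero_le
    rw [ae_iff]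
    refine measure_mono_null (fun x hx => ?_) hN
    simp only [Set.mem_setOf_eq] at hx
    by_contra hxN
    simp only [Set.mem_union, Set.mem_compl_iff, Set.mem_setOf_eq, not_or, not_and, not_not] at hxN
    refine hx ?_
    filter_upwards [key x hxN.1 (hxN.2 hxN.1)] with l hl
    simpa using hl
  have hfin := MeasureTheory.tendsto_measure_of_ae_tendsto_indicator_of_isFiniteMeasure
    (𝓝[>] (0:ℝ)) MeasurableSet.empty hAsm hae
  rw [measure_empty] at hfin
  refine hfin.congr' ?_
  filter_upwards [self_mem_nhdsWithin] with l hl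
  simp [hAs, Set.mem_Ioi.mp hl]
end

section
/- Let Ψ be an open subset of ℝ^k with ν Lebesgue measure and the prior Π and posterior Π_post probability measures on Ψ with densities p and q with respect to ν, p continuous and strictly positive. Suppose {B_λ(ψ) : ψ ∈ Ψ} is a regular discretization of Ψ for each λ > 0, that Π_post(B_λ(ψ))/Π(B_λ(ψ)) → q(ψ)/p(ψ) as λ → 0 for every ψ, and that the relative belief ratio has a continuous posterior distribution, i.e., Π_post({ψ : q(ψ)/p(ψ) = c}) = 0 for every c ≥ 0. Fix γ ∈ (0, 1). Define S_c = {ψ : q(ψ)/p(ψ) ≥ c}, S_{λ,c} = {ψ : Π_post(B_λ(ψ))/Π(B_λ(ψ)) ≥ c}, the γ-relative surprise region C_γ = S_{c_γ} with c_γ = sup{k ≥ 0 : Π_post(S_k) ≥ γ}, and the undiscretized γ-relative surprise region of the discretized problem C_{λ,γ} = S_{λ,c_{λ,γ}} with c_{λ,γ} = sup{k ≥ 0 : Π_post(S_{λ,k}) ≥ γ}. Then Π_post(C_{λ,γ} Δ C_γ) → 0 as λ → 0. -/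
open MeasureTheory Filter
open scoped Topology symmDiff

private theorem stmt_16_aux {k : ℕ} (Ψ : Set (EuclideanSpace ℝ (Fin k))) (hΨopen : IsOpen Ψ)
    (p q : EuclideanSpace ℝ (Fin k) → ℝ)
    (hpc : Continuous p) (hppos : ∀ x, 0 < p x)
    (hqm : Measurable q) (hqnn : ∀ x, 0 ≤ q x)
    (Pri Post : Measure (EuclideanSpace ℝ (Fin k)))
    [IsProbabilityMeasure Pri] [IsProbabilityMeasure Post]
    (hPri : Pri = (volume.restrict Ψ).withDensity fun x => ENNReal.ofReal (p x))
    (hPost : Post = (volume.restrict Ψ).withDensity fun x => ENNReal.ofReal (q x))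
    (B : ℝ → EuclideanSpace ℝ (Fin k) → Set (EuclideanSpace ℝ (Fin k)))
    (hBmem : ∀ ⦃l : ℝ⦄, 0 < l → ∀ ψ ∈ Ψ, ψ ∈ B l ψ)
    (hBm : ∀ ⦃l : ℝ⦄, 0 < l → ∀ ψ ∈ Ψ, MeasurableSet (B l ψ))
    (hBsub : ∀ ⦃l : ℝ⦄, 0 < l → ∀ ψ ∈ Ψ, B l ψ ⊆ Ψ)
    (hBpart : ∀ ⦃l : ℝ⦄, 0 < l → ∀ ψ ∈ Ψ, ∀ ψ' ∈ Ψ, ψ' ∈ B l ψ → B l ψ' = B l ψ)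
    (hBcnt : ∀ ⦃l : ℝ⦄, 0 < l → Set.Countable (B l '' Ψ))
    (hconv : ∀ ψ ∈ Ψ,
      Tendsto (fun l => (Post (B l ψ)).toReal / (Pri (B l ψ)).toReal)
        (𝓝[>] 0) (𝓝 (q ψ / p ψ)))
    (hcontdist : ∀ c : ℝ, 0 ≤ c → Post {ψ ∈ Ψ | q ψ / p ψ = c} = 0)
    (γ : ℝ) (hγ : 0 < γ) (hγ1 : γ < 1)
    (S : ℝ → Set (EuclideanSpace ℝ (Fin k)))
    (hS : ∀ c, S c = {ψ ∈ Ψ | c ≤ q ψ / p ψ})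
    (Sl : ℝ → ℝ → Set (EuclideanSpace ℝ (Fin k)))
    (hSl : ∀ l c, Sl l c = {ψ ∈ Ψ | c ≤ (Post (B l ψ)).toReal / (Pri (B l ψ)).toReal})
    (cγ : ℝ) (hcγ : cγ = sSup {c : ℝ | 0 ≤ c ∧ γ ≤ (Post (S c)).toReal})
    (Cγ : Set (EuclideanSpace ℝ (Fin k))) (hCγ : Cγ = S cγ)
    (cl : ℝ → ℝ) (hcl : ∀ l, cl l = sSup {c : ℝ | 0 ≤ c ∧ γ ≤ (Post (Sl l c)).toReal})
    (Cl : ℝ → Set (EuclideanSpace ℝ (Fin k))) (hCl : ∀ l, Cl l = Sl l (cl l)) :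
    Tendsto (fun l => Post (Cl l ∆ Cγ)) (𝓝[>] 0) (𝓝 0) := by
  classical
  set r : EuclideanSpace ℝ (Fin k) → ℝ := fun ψ => q ψ / p ψ with hr
  set f : ℝ → EuclideanSpace ℝ (Fin k) → ℝ :=
    fun l ψ => (Post (B l ψ)).toReal / (Pri (B l ψ)).toReal with hf
  have hΨm : MeasurableSet Ψ := hΨopen.measurableSet
  have hrm : Measurable r := hqm.div hpc.measurable
  have hr0 : ∀ ψ, 0 ≤ r ψ := fun ψ => div_nonneg (hqnn ψ) (hppos ψ).le
  have hfin : ∀ s : Set (EuclideanSpace ℝ (Fin k)), Post s ≠ ⊤ := fun s => measure_ne_top Post s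
  -- Post is carried on Ψ
  have hPostΨc : Post Ψᶜ = 0 := by
    rw [hPost, withDensity_apply _ hΨm.compl, Measure.restrict_restrict hΨm.compl,
      Set.compl_inter_self, Measure.restrict_empty, lintegral_zero_measure]
  have hPostΨ : Post Ψ = 1 := (prob_compl_eq_zero_iff hΨm).mp hPostΨc
  -- basic facts about S
  have hmS : ∀ c, MeasurableSet (S c) := by
    intro c
    rw [hS]
    exact hΨm.inter (measurableSet_le measurable_const hrm)
  have hSanti : ∀ {u v : ℝ}, u ≤ v → S v ⊆ S u := by
    intro u v huv
    rw [hS, hS]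
    exact fun ψ hψ => ⟨hψ.1, huv.trans hψ.2⟩
  have hnull : ∀ c : ℝ, Post {ψ | ψ ∈ Ψ ∧ r ψ = c} = 0 := by
    intro c
    rcases le_or_gt 0 c with hc | hc
    · exact hcontdist c hc
    · have he : {ψ | ψ ∈ Ψ ∧ r ψ = c} = ∅ := by
        ext ψ
        simp only [Set.mem_setOf_eq, Set.mem_empty_iff_false, iff_false, not_and]
        intro _ hrc
        exact absurd (hrc ▸ hr0 ψ) (not_le.mpr hc)
      rw [he, measure_empty]
  have hmono : ∀ {u v : ℝ}, u ≤ v → Post (S v) ≤ Post (S u) :=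
    fun {u v} huv => measure_mono (hSanti huv)
  have htR : ∀ {u v : ℝ}, u ≤ v → (Post (S v)).toReal ≤ (Post (S u)).toReal :=
    fun {u v} huv => ENNReal.toReal_mono (hfin _) (hmono huv)
  have hS0 : S 0 = Ψ := by
    rw [hS]; ext ψ; simp only [Set.mem_setOf_eq, and_iff_left_iff_imp]
    exact fun _ => hr0 ψ
  have h0 : (Post (S 0)).toReal = 1 := by rw [hS0, hPostΨ, ENNReal.toReal_one]
  -- upper tail vanishes
  have htail : ∃ n₀ : ℕ, (Post (S n₀)).toReal < γ := by
    set s : ℕ → Set (EuclideanSpace ℝ (Fin k)) := fun n => S (n : ℝ) with hs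
    have hI : ⋂ n : ℕ, s n = ∅ := by
      ext ψ
      simp only [Set.mem_iInter, Set.mem_empty_iff_false, iff_false, not_forall]
      obtain ⟨n, hn⟩ := exists_nat_gt (r ψ)
      refine ⟨n, ?_⟩
      simp only [hs]
      rw [hS]
      exact fun hmem => absurd hmem.2 (not_le.mpr hn)
    have hto := tendsto_measure_iInter_atTop (μ := Post)
      (fun n => (hmS ((n : ℕ) : ℝ)).nullMeasurableSet)
      (fun m n hmn => hSanti (by exact_mod_cast hmn)) ⟨0, hfin _⟩
    rw [hI, measure_empty] at hto
    have h2 : Tendsto (fun n : ℕ => (Post (s n)).toReal) atTop (𝓝 0) := by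
      simpa [hs, Function.comp_def] using (ENNReal.tendsto_toReal (by simp)).comp hto
    obtain ⟨n₀, hn₀⟩ := (h2.eventually_lt_const hγ).exists
    exact ⟨n₀, hn₀⟩
  obtain ⟨n₀, hn₀⟩ := htail
  -- facts about cγ
  set M : Set ℝ := {c : ℝ | 0 ≤ c ∧ γ ≤ (Post (S c)).toReal} with hM
  have hM0 : (0 : ℝ) ∈ M := ⟨le_refl 0, h0 ▸ hγ1.le⟩
  have hMub : ∀ x ∈ M, x ≤ (n₀ : ℝ) := by
    intro x hx
    by_contra hgt
    push_neg at hgt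
    exact absurd hx.2 (not_le.mpr (lt_of_le_of_lt (htR hgt.le) hn₀))
  have hMbdd : BddAbove M := ⟨n₀, hMub⟩
  have hcγ0 : 0 ≤ cγ := hcγ ▸ le_csSup hMbdd hM0
  have hlt : ∀ c : ℝ, cγ < c → (Post (S c)).toReal < γ := by
    intro c hc
    by_contra hge
    push_neg at hge
    exact absurd (hcγ ▸ le_csSup hMbdd ⟨hcγ0.trans hc.le, hge⟩) (not_le.mpr hc)
  have hge : ∀ c : ℝ, 0 ≤ c → c < cγ → γ ≤ (Post (S c)).toReal := by
    intro c _ hc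
    obtain ⟨c', hc'M, hcc'⟩ := exists_lt_of_lt_csSup ⟨0, hM0⟩ (hcγ ▸ hc)
    exact le_trans hc'M.2 (htR hcc'.le)
  -- generic tail bound via strict-above sets
  have hUnion : ∀ b : ℝ, Post {ψ | ψ ∈ Ψ ∧ b < r ψ} ≤ ENNReal.ofReal γ →
      (Post (S b)).toReal ≤ γ := by
    intro b hb
    have hsub : S b ⊆ {ψ | ψ ∈ Ψ ∧ b < r ψ} ∪ {ψ | ψ ∈ Ψ ∧ r ψ = b} := by
      rw [hS]
      intro ψ hψ
      rcases lt_or_eq_of_le hψ.2 with h | h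
      · exact Or.inl ⟨hψ.1, h⟩
      · exact Or.inr ⟨hψ.1, h.symm⟩
    have hle : Post (S b) ≤ ENNReal.ofReal γ := by
      calc Post (S b) ≤ Post ({ψ | ψ ∈ Ψ ∧ b < r ψ} ∪ {ψ | ψ ∈ Ψ ∧ r ψ = b}) :=
            measure_mono hsub
        _ ≤ Post {ψ | ψ ∈ Ψ ∧ b < r ψ} + Post {ψ | ψ ∈ Ψ ∧ r ψ = b} := measure_union_le _ _
        _ ≤ ENNReal.ofReal γ + 0 := add_le_add hb (le_of_eq (hnull b))
        _ = ENNReal.ofReal γ := by rw [add_zero]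
    exact ENNReal.toReal_le_of_le_ofReal hγ.le hle
  have hUB : ∀ b : ℝ, (∀ c : ℝ, b < c → (Post (S c)).toReal ≤ γ) →
      (Post (S b)).toReal ≤ γ := by
    intro b hb
    apply hUnion
    set s : ℕ → Set (EuclideanSpace ℝ (Fin k)) := fun n => S (b + 1 / ((n : ℝ) + 1)) with hs
    have hU : {ψ | ψ ∈ Ψ ∧ b < r ψ} = ⋃ n : ℕ, s n := by
      ext ψ
      simp only [Set.mem_iUnion, Set.mem_setOf_eq]
      constructor
      · rintro ⟨hψ, hlt'⟩
        obtain ⟨n, hn⟩ := exists_nat_one_div_lt (sub_pos.mpr hlt')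
        refine ⟨n, ?_⟩
        simp only [hs]
        rw [hS]
        exact ⟨hψ, by linarith⟩
      · rintro ⟨n, hn⟩
        simp only [hs] at hn
        rw [hS] at hn
        have hpos : (0:ℝ) < 1 / ((n : ℝ) + 1) := by positivity
        exact ⟨hn.1, lt_of_lt_of_le (lt_add_of_pos_right b hpos) hn.2⟩
    rw [hU]
    have hmon : Monotone s := by
      intro m n hmn
      have hle : b + 1 / ((n : ℝ) + 1) ≤ b + 1 / ((m : ℝ) + 1) := by
        have h2 : (m : ℝ) + 1 ≤ (n : ℝ) + 1 := by exact_mod_cast Nat.add_le_add_right hmn 1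
        have h1 : (0:ℝ) < (m : ℝ) + 1 := by positivity
        have := one_div_le_one_div_of_le h1 h2
        linarith
      exact hSanti hle
    have hto := tendsto_measure_iUnion_atTop (μ := Post) hmon
    apply le_of_tendsto hto
    apply Eventually.of_forall
    intro n
    have hcn : b < b + 1 / ((n : ℝ) + 1) := lt_add_of_pos_right b (by positivity)
    exact (ENNReal.le_ofReal_iff_toReal_le (hfin _) hγ.le).mpr (hb _ hcn)
  have hLB : ∀ b : ℝ, 0 ≤ b → (∀ c : ℝ, 0 ≤ c → c < b → γ ≤ (Post (S c)).toReal) →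
      γ ≤ (Post (S b)).toReal := by
    intro b hb0 hb
    rcases eq_or_lt_of_le hb0 with hb0' | hb0'
    · rw [← hb0', h0]; exact hγ1.le
    set s : ℕ → Set (EuclideanSpace ℝ (Fin k)) := fun n => S (b - b / ((n : ℝ) + 1)) with hs
    have hI : S b = ⋂ n : ℕ, s n := by
      ext ψ
      simp only [Set.mem_iInter]
      constructor
      · intro hψ n
        simp only [hs]
        rw [hS]
        rw [hS] at hψ
        have hd : (0:ℝ) ≤ b / ((n : ℝ) + 1) := by positivity
        exact ⟨hψ.1, le_trans (by linarith) hψ.2⟩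
      · intro hψ
        have hψΨ : ψ ∈ Ψ := by
          have h00 := hψ 0
          simp only [hs] at h00
          rw [hS] at h00
          exact h00.1
        rw [hS]
        refine ⟨hψΨ, ?_⟩
        have hlim : Tendsto (fun n : ℕ => b - b / ((n : ℝ) + 1)) atTop (𝓝 b) := by
          have h1 : Tendsto (fun n : ℕ => b / ((n : ℝ) + 1)) atTop (𝓝 0) := by
            apply Tendsto.div_atTop (tendsto_const_nhds)
            exact tendsto_atTop_add_const_right atTop 1 (tendsto_natCast_atTop_atTop (R := ℝ))
          simpa using (tendsto_const_nhds (x := b) (f := atTop (α := ℕ))).sub h1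
        apply le_of_tendsto hlim
        apply Eventually.of_forall
        intro n
        have hn' := hψ n
        simp only [hs] at hn'
        rw [hS] at hn'
        exact hn'.2
    have hanti : Antitone s := by
      intro m n hmn
      have h2 : (m : ℝ) + 1 ≤ (n : ℝ) + 1 := by exact_mod_cast Nat.add_le_add_right hmn 1
      have h1 : (0:ℝ) < (m : ℝ) + 1 := by positivity
      have h3 : b / ((n : ℝ) + 1) ≤ b / ((m : ℝ) + 1) := by
        apply div_le_div_of_nonneg_left hb0 h1 h2
      exact hSanti (by linarith)
    have hto := tendsto_measure_iInter_atTop (μ := Post)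
      (fun n => (hmS _).nullMeasurableSet) hanti ⟨0, hfin _⟩
    rw [← hI] at hto
    have hoγ : ENNReal.ofReal γ ≤ Post (S b) := by
      apply ge_of_tendsto hto
      apply Eventually.of_forall
      intro n
      have hcn0 : 0 ≤ b - b / ((n : ℝ) + 1) := by
        have h1 : (0:ℝ) < (n : ℝ) + 1 := by positivity
        have : b / ((n : ℝ) + 1) ≤ b / 1 := by
          apply div_le_div_of_nonneg_left hb0 one_pos (by linarith)
        simpa using by linarith
      have hcnb : b - b / ((n : ℝ) + 1) < b := by
        have h1 : (0:ℝ) < (n : ℝ) + 1 := by positivity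
        have : 0 < b / ((n : ℝ) + 1) := div_pos hb0' h1
        linarith
      have := hb _ hcn0 hcnb
      exact (ENNReal.ofReal_le_iff_le_toReal (hfin _)).mpr this
    calc γ = (ENNReal.ofReal γ).toReal := by rw [ENNReal.toReal_ofReal hγ.le]
      _ ≤ (Post (S b)).toReal := ENNReal.toReal_mono (hfin _) hoγ
  -- value at cγ
  have hcγle : (Post (S cγ)).toReal ≤ γ := hUB cγ fun c hc => (hlt c hc).le
  have hcγge : γ ≤ (Post (S cγ)).toReal := hLB cγ hcγ0 hge
  -- the lower quantile a
  set N : Set ℝ := {c : ℝ | 0 ≤ c ∧ (Post (S c)).toReal ≤ γ} with hN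
  have hNcγ : cγ ∈ N := ⟨hcγ0, hcγle⟩
  have hNbdd : BddBelow N := ⟨0, fun c hc => hc.1⟩
  set a : ℝ := sInf N with ha
  have ha0 : 0 ≤ a := le_csInf ⟨cγ, hNcγ⟩ fun c hc => hc.1
  have hacγ : a ≤ cγ := csInf_le hNbdd hNcγ
  have hgt : ∀ c : ℝ, 0 ≤ c → c < a → γ < (Post (S c)).toReal := by
    intro c hc0 hca
    by_contra hh
    push_neg at hh
    exact absurd (csInf_le hNbdd ⟨hc0, hh⟩) (not_le.mpr hca)
  have hNle : ∀ c : ℝ, a < c → (Post (S c)).toReal ≤ γ := by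
    intro c hc
    obtain ⟨c', hc', hcc'⟩ := exists_lt_of_csInf_lt ⟨cγ, hNcγ⟩ hc
    exact (htR hcc'.le).trans hc'.2
  have ha_le : (Post (S a)).toReal ≤ γ := hUB a hNle
  have ha_pos : 0 < a := by
    rcases eq_or_lt_of_le ha0 with h | h
    · exfalso
      rw [← h, h0] at ha_le
      exact absurd ha_le (not_le.mpr hγ1)
    · exact h
  have ha_ge : γ ≤ (Post (S a)).toReal := hLB a ha0 fun c hc0 hca => (hgt c hc0 hca).le
  -- band lemma
  have hband : ∀ u v : ℝ, u ≤ v →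
      Post {ψ | ψ ∈ Ψ ∧ u ≤ r ψ ∧ r ψ ≤ v} = Post (S u) - Post (S v) := by
    intro u v huv
    set W : Set (EuclideanSpace ℝ (Fin k)) := {ψ | ψ ∈ Ψ ∧ v < r ψ} with hW
    have hWm : MeasurableSet W := hΨm.inter (measurableSet_lt measurable_const hrm)
    have hWS : Post W = Post (S v) := by
      apply le_antisymm
      · apply measure_mono
        rw [hS]
        exact fun ψ hψ => ⟨hψ.1, hψ.2.le⟩
      · have hsub : S v ⊆ W ∪ {ψ | ψ ∈ Ψ ∧ r ψ = v} := by
          rw [hS]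
          intro ψ hψ
          rcases lt_or_eq_of_le hψ.2 with h | h
          · exact Or.inl ⟨hψ.1, h⟩
          · exact Or.inr ⟨hψ.1, h.symm⟩
        calc Post (S v) ≤ Post (W ∪ {ψ | ψ ∈ Ψ ∧ r ψ = v}) := measure_mono hsub
          _ ≤ Post W + Post {ψ | ψ ∈ Ψ ∧ r ψ = v} := measure_union_le _ _
          _ = Post W := by rw [hnull v, add_zero]
    have hWsub : W ⊆ S u := by
      rw [hS]
      exact fun ψ hψ => ⟨hψ.1, huv.trans hψ.2.le⟩
    have hdiff : {ψ | ψ ∈ Ψ ∧ u ≤ r ψ ∧ r ψ ≤ v} = S u \ W := by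
      rw [hS]
      ext ψ
      simp only [Set.mem_setOf_eq, Set.mem_diff, hW]
      constructor
      · rintro ⟨h1, h2, h3⟩
        exact ⟨⟨h1, h2⟩, fun hc => absurd h3 (not_le.mpr hc.2)⟩
      · rintro ⟨⟨h1, h2⟩, h3⟩
        refine ⟨h1, h2, ?_⟩
        by_contra hc
        exact h3 ⟨h1, not_le.mp hc⟩
    rw [hdiff, measure_diff hWsub hWm.nullMeasurableSet (hfin W), hWS]
  have hband0 : Post {ψ | ψ ∈ Ψ ∧ a ≤ r ψ ∧ r ψ ≤ cγ} = 0 := by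
    rw [hband a cγ hacγ]
    have heq : Post (S a) = Post (S cγ) := by
      have h1 : (Post (S a)).toReal = (Post (S cγ)).toReal := by
        rw [le_antisymm ha_le ha_ge, le_antisymm hcγle hcγge]
      exact (ENNReal.toReal_eq_toReal_iff' (hfin _) (hfin _)).mp h1
    rw [heq, tsub_self]
  -- shrinking bands around [a, cγ]
  have hDto : Tendsto
      (fun n : ℕ => Post {ψ | ψ ∈ Ψ ∧ a - 1 / ((n : ℝ) + 1) ≤ r ψ ∧ r ψ ≤ cγ + 1 / ((n : ℝ) + 1)})
      atTop (𝓝 0) := by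
    set D : ℕ → Set (EuclideanSpace ℝ (Fin k)) :=
      fun n => {ψ | ψ ∈ Ψ ∧ a - 1 / ((n : ℝ) + 1) ≤ r ψ ∧ r ψ ≤ cγ + 1 / ((n : ℝ) + 1)} with hD
    have hDm : ∀ n, MeasurableSet (D n) :=
      fun n => hΨm.inter ((measurableSet_le measurable_const hrm).inter
        (measurableSet_le hrm measurable_const))
    have hDanti : Antitone D := by
      intro m n hmn
      have h2 : (m : ℝ) + 1 ≤ (n : ℝ) + 1 := by exact_mod_cast Nat.add_le_add_right hmn 1
      have h1 : (0:ℝ) < (m : ℝ) + 1 := by positivity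
      have h3 : 1 / ((n : ℝ) + 1) ≤ 1 / ((m : ℝ) + 1) := one_div_le_one_div_of_le h1 h2
      rintro ψ ⟨hψ1, hψ2, hψ3⟩
      exact ⟨hψ1, le_trans (by linarith) hψ2, le_trans hψ3 (by linarith)⟩
    have hDint : ⋂ n, D n = {ψ | ψ ∈ Ψ ∧ a ≤ r ψ ∧ r ψ ≤ cγ} := by
      ext ψ
      simp only [Set.mem_iInter, hD, Set.mem_setOf_eq]
      constructor
      · intro hψ
        have hψΨ : ψ ∈ Ψ := (hψ 0).1
        refine ⟨hψΨ, ?_, ?_⟩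
        · have hlim : Tendsto (fun n : ℕ => a - 1 / ((n : ℝ) + 1)) atTop (𝓝 a) := by
            simpa using (tendsto_const_nhds (x := a) (f := atTop (α := ℕ))).sub
              tendsto_one_div_add_atTop_nhds_zero_nat
          exact le_of_tendsto hlim (Eventually.of_forall fun n => (hψ n).2.1)
        · have hlim : Tendsto (fun n : ℕ => cγ + 1 / ((n : ℝ) + 1)) atTop (𝓝 cγ) := by
            simpa using (tendsto_const_nhds (x := cγ) (f := atTop (α := ℕ))).add
              tendsto_one_div_add_atTop_nhds_zero_nat
          exact ge_of_tendsto hlim (Eventually.of_forall fun n => (hψ n).2.2)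
      · rintro ⟨h1, h2, h3⟩ n
        have hpos : (0:ℝ) < 1 / ((n : ℝ) + 1) := by positivity
        exact ⟨h1, by linarith, by linarith⟩
    have hto := tendsto_measure_iInter_atTop (μ := Post)
      (fun n => (hDm n).nullMeasurableSet) hDanti ⟨0, hfin _⟩
    rw [hDint, hband0] at hto
    exact hto
  -- measurability of f-preimages within Ψ
  have hpre : ∀ l : ℝ, 0 < l → ∀ t : Set ℝ, MeasurableSet {ψ | ψ ∈ Ψ ∧ f l ψ ∈ t} := by
    intro l hl t
    have hconst : ∀ ψ ∈ Ψ, ∀ ψ' ∈ B l ψ, f l ψ' = f l ψ := by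
      intro ψ hψ ψ' hψ'
      have hψ'Ψ : ψ' ∈ Ψ := hBsub hl ψ hψ hψ'
      have hBeq := hBpart hl ψ hψ ψ' hψ'Ψ hψ'
      simp only [hf, hBeq]
    have hrepr : {ψ | ψ ∈ Ψ ∧ f l ψ ∈ t} = ⋃₀ (B l '' {ψ | ψ ∈ Ψ ∧ f l ψ ∈ t}) := by
      ext ψ
      constructor
      · intro hψ
        exact ⟨B l ψ, ⟨ψ, hψ, rfl⟩, hBmem hl ψ hψ.1⟩
      · rintro ⟨A, ⟨ψ₀, hψ₀, rfl⟩, hψA⟩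
        have hψΨ : ψ ∈ Ψ := hBsub hl ψ₀ hψ₀.1 hψA
        exact ⟨hψΨ, by rw [hconst ψ₀ hψ₀.1 ψ hψA]; exact hψ₀.2⟩
    rw [hrepr]
    apply MeasurableSet.sUnion
    · exact ((hBcnt hl).mono (Set.image_mono fun ψ hψ => hψ.1))
    · rintro A ⟨ψ₀, hψ₀, rfl⟩
      exact hBm hl ψ₀ hψ₀.1
  have hSlm : ∀ l : ℝ, 0 < l → ∀ c, MeasurableSet (Sl l c) := by
    intro l hl c
    rw [hSl]
    exact hpre l hl (Set.Ici c)
  have hgm : ∀ l : ℝ, 0 < l → Measurable (fun ψ => if ψ ∈ Ψ then f l ψ else 0) := by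
    intro l hl t ht
    by_cases h0 : (0:ℝ) ∈ t
    · have hp : (fun ψ => if ψ ∈ Ψ then f l ψ else 0) ⁻¹' t
          = {ψ | ψ ∈ Ψ ∧ f l ψ ∈ t} ∪ Ψᶜ := by
        ext ψ
        by_cases hψ : ψ ∈ Ψ <;> simp [Set.mem_preimage, hψ, h0]
      rw [hp]
      exact (hpre l hl t).union hΨm.compl
    · have hp : (fun ψ => if ψ ∈ Ψ then f l ψ else 0) ⁻¹' t
          = {ψ | ψ ∈ Ψ ∧ f l ψ ∈ t} := by
        ext ψ
        by_cases hψ : ψ ∈ Ψ <;> simp [Set.mem_preimage, hψ, h0]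
      rw [hp]
      exact hpre l hl t
  -- key convergence 1 : measures of Sl l c converge
  have key1 : ∀ c : ℝ, Tendsto (fun l => Post (Sl l c)) (𝓝[>] (0:ℝ)) (𝓝 (Post (S c))) := by
    intro c
    set As : ℝ → Set (EuclideanSpace ℝ (Fin k)) :=
      fun l => if 0 < l then Sl l c else S c with hAs
    have hAsm : ∀ l, MeasurableSet (As l) := by
      intro l
      by_cases hl : 0 < l
      · simpa [hAs, hl] using hSlm l hl c
      · simpa [hAs, hl] using hmS c
    have hlim : ∀ᵐ ψ ∂Post, ∀ᶠ l in 𝓝[>] (0:ℝ), ψ ∈ As l ↔ ψ ∈ S c := by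
      rw [ae_iff]
      apply measure_mono_null _ (measure_union_null hPostΨc (hnull c))
      intro ψ hψ
      simp only [Set.mem_setOf_eq] at hψ
      by_cases hψΨ : ψ ∈ Ψ
      swap
      · exact Or.inl hψΨ
      by_cases hψrc : r ψ = c
      · exact Or.inr ⟨hψΨ, hψrc⟩
      exfalso
      apply hψ
      rcases lt_or_gt_of_ne hψrc with hcase | hcase
      · -- r ψ < c : eventually not in either set
        have hev := (hconv ψ hψΨ).eventually_lt_const hcase
        filter_upwards [hev, self_mem_nhdsWithin] with l hl1 hl2
        have hl0 : (0:ℝ) < l := hl2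
        apply iff_of_false
        · rw [hAs]
          simp only [hl0, if_true]
          rw [hSl]
          exact fun hmem' => absurd hmem'.2 (not_le.mpr hl1)
        · rw [hS]
          exact fun hmem' => absurd hmem'.2 (not_le.mpr hcase)
      · -- c < r ψ : eventually in both sets
        have hev := (hconv ψ hψΨ).eventually_const_lt hcase
        filter_upwards [hev, self_mem_nhdsWithin] with l hl1 hl2
        have hl0 : (0:ℝ) < l := hl2
        apply iff_of_true
        · rw [hAs]
          simp only [hl0, if_true]
          rw [hSl]
          exact ⟨hψΨ, hl1.le⟩
        · rw [hS]
          exact ⟨hψΨ, hcase.le⟩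
    have hmain := tendsto_measure_of_ae_tendsto_indicator_of_isFiniteMeasure
      (𝓝[>] (0:ℝ)) (hmS c) hAsm hlim
    apply hmain.congr'
    filter_upwards [self_mem_nhdsWithin] with l hl
    have hl0 : (0:ℝ) < l := hl
    rw [hAs]
    simp [hl0]
  -- key convergence 2 : deviation sets are small
  have key2 : ∀ η : ℝ, 0 < η →
      Tendsto (fun l => Post {ψ | ψ ∈ Ψ ∧ η ≤ |f l ψ - r ψ|}) (𝓝[>] (0:ℝ)) (𝓝 0) := by
    intro η hη
    set As : ℝ → Set (EuclideanSpace ℝ (Fin k)) :=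
      fun l => if 0 < l then {ψ | ψ ∈ Ψ ∧ η ≤ |f l ψ - r ψ|} else ∅ with hAs
    have hAsm : ∀ l, MeasurableSet (As l) := by
      intro l
      by_cases hl : 0 < l
      · have hEq : {ψ | ψ ∈ Ψ ∧ η ≤ |f l ψ - r ψ|}
            = {ψ | ψ ∈ Ψ ∧ η ≤ |(if ψ ∈ Ψ then f l ψ else 0) - r ψ|} := by
          ext ψ
          by_cases hψ : ψ ∈ Ψ <;> simp [hψ]
        have hms : MeasurableSet {ψ | ψ ∈ Ψ ∧ η ≤ |(if ψ ∈ Ψ then f l ψ else 0) - r ψ|} :=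
          hΨm.inter (measurableSet_le measurable_const ((hgm l hl).sub hrm).abs)
        simpa [hAs, hl, hEq] using hms
      · simpa [hAs, hl] using MeasurableSet.empty
    have hlim : ∀ᵐ ψ ∂Post, ∀ᶠ l in 𝓝[>] (0:ℝ),
        ψ ∈ As l ↔ ψ ∈ (∅ : Set (EuclideanSpace ℝ (Fin k))) := by
      rw [ae_iff]
      apply measure_mono_null _ hPostΨc
      intro ψ hψ
      simp only [Set.mem_setOf_eq] at hψ
      by_cases hψΨ : ψ ∈ Ψ
      swap
      · exact hψΨ
      exfalso
      apply hψ
      have hev := Metric.tendsto_nhds.mp (hconv ψ hψΨ) η hη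
      filter_upwards [hev, self_mem_nhdsWithin] with l hl1 hl2
      have hl0 : (0:ℝ) < l := hl2
      apply iff_of_false
      · rw [hAs]
        simp only [hl0, if_true]
        rw [Real.dist_eq] at hl1
        exact fun hmem' => absurd hmem'.2 (not_le.mpr hl1)
      · exact Set.notMem_empty ψ
    have hmain := tendsto_measure_of_ae_tendsto_indicator_of_isFiniteMeasure
      (𝓝[>] (0:ℝ)) MeasurableSet.empty hAsm hlim
    rw [measure_empty] at hmain
    apply hmain.congr'
    filter_upwards [self_mem_nhdsWithin] with l hl
    have hl0 : (0:ℝ) < l := hl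
    rw [hAs]
    simp [hl0]
  -- antitonicity of discretized surprise sets
  have hSlanti : ∀ l : ℝ, ∀ {u v : ℝ}, u ≤ v → Sl l v ⊆ Sl l u := by
    intro l u v huv
    rw [hSl, hSl]
    exact fun ψ hψ => ⟨hψ.1, huv.trans hψ.2⟩
  -- MAIN ARGUMENT
  rw [ENNReal.tendsto_nhds_zero]
  intro ε hε
  have hε2 : (0:ENNReal) < ε / 2 := ENNReal.half_pos hε.ne'
  obtain ⟨n₁, hn₁⟩ :=
    (hDto.eventually_lt_const hε2).exists
  set η' : ℝ := 1 / ((n₁ : ℝ) + 1) with hη'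
  have hη'pos : 0 < η' := by positivity
  set c₁ : ℝ := max (a - η' / 3) (a / 2) with hc₁
  set c₂ : ℝ := cγ + η' / 3 with hc₂
  have hc₁0 : 0 ≤ c₁ := le_max_of_le_right (by linarith)
  have hc₁a : c₁ < a := max_lt (by linarith) (by linarith)
  have hγ₁ : γ < (Post (S c₁)).toReal := hgt c₁ hc₁0 hc₁a
  have hc₂0 : 0 ≤ c₂ := by simp only [hc₂]; linarith
  have hcγc₂ : cγ < c₂ := by simp only [hc₂]; linarith
  have hγ₂ : (Post (S c₂)).toReal < γ := hlt c₂ hcγc₂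
  have ht₁ : Tendsto (fun l => (Post (Sl l c₁)).toReal) (𝓝[>] (0:ℝ))
      (𝓝 ((Post (S c₁)).toReal)) := (ENNReal.tendsto_toReal (hfin _)).comp (key1 c₁)
  have ht₂ : Tendsto (fun l => (Post (Sl l c₂)).toReal) (𝓝[>] (0:ℝ))
      (𝓝 ((Post (S c₂)).toReal)) := (ENNReal.tendsto_toReal (hfin _)).comp (key1 c₂)
  have ev1 := ht₁.eventually_const_lt hγ₁
  have ev2 := ht₂.eventually_lt_const hγ₂
  have ev3 := (key2 (η' / 3) (by positivity)).eventually_lt_const hε2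
  filter_upwards [ev1, ev2, ev3, self_mem_nhdsWithin] with l h1 h2 h3 hlmem
  have hl0 : (0:ℝ) < l := hlmem
  -- bounds on cl l
  have hub : ∀ x ∈ {c : ℝ | 0 ≤ c ∧ γ ≤ (Post (Sl l c)).toReal}, x ≤ c₂ := by
    intro x hx
    by_contra hgt'
    push_neg at hgt'
    have hmx : (Post (Sl l x)).toReal ≤ (Post (Sl l c₂)).toReal :=
      ENNReal.toReal_mono (hfin _) (measure_mono (hSlanti l hgt'.le))
    exact absurd hx.2 (not_le.mpr (lt_of_le_of_lt hmx h2))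
  have hclle : cl l ≤ c₂ := by
    rw [hcl]
    exact Real.sSup_le hub hc₂0
  have hclge : c₁ ≤ cl l := by
    rw [hcl]
    exact le_csSup ⟨c₂, hub⟩ ⟨hc₁0, h1.le⟩
  -- inclusion of the symmetric difference
  have hsub : Cl l ∆ Cγ ⊆ {ψ | ψ ∈ Ψ ∧ η' / 3 ≤ |f l ψ - r ψ|}
      ∪ {ψ | ψ ∈ Ψ ∧ a - 1 / ((n₁ : ℝ) + 1) ≤ r ψ ∧ r ψ ≤ cγ + 1 / ((n₁ : ℝ) + 1)} := by
    intro ψ hψ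
    rw [Set.mem_symmDiff] at hψ
    have hψΨ : ψ ∈ Ψ := by
      rcases hψ with ⟨hin, _⟩ | ⟨hin, _⟩
      · rw [hCl, hSl] at hin; exact hin.1
      · rw [hCγ, hS] at hin; exact hin.1
    by_cases hE : η' / 3 ≤ |f l ψ - r ψ|
    · exact Or.inl ⟨hψΨ, hE⟩
    · right
      push_neg at hE
      have habs := abs_lt.mp hE
      rcases hψ with ⟨hin, hout⟩ | ⟨hin, hout⟩
      · rw [hCl, hSl] at hin
        rw [hCγ, hS] at hout
        have hfcl : cl l ≤ f l ψ := hin.2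
        have hrlt : r ψ < cγ := by
          by_contra h'
          exact hout ⟨hψΨ, not_lt.mp h'⟩
        have h₁ : a - η' / 3 ≤ c₁ := le_max_left _ _
        rw [← hη']
        exact ⟨hψΨ, by linarith [habs.2], by linarith⟩
      · rw [hCγ, hS] at hin
        rw [hCl, hSl] at hout
        have hrge : cγ ≤ r ψ := hin.2
        have hflt : f l ψ < cl l := by
          by_contra h'
          exact hout ⟨hψΨ, not_lt.mp h'⟩
        rw [← hη']
        refine ⟨hψΨ, by linarith, ?_⟩
        have h2' : cl l ≤ cγ + η' / 3 := hclle
        linarith [habs.1]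
  calc Post (Cl l ∆ Cγ)
      ≤ Post ({ψ | ψ ∈ Ψ ∧ η' / 3 ≤ |f l ψ - r ψ|}
        ∪ {ψ | ψ ∈ Ψ ∧ a - 1 / ((n₁ : ℝ) + 1) ≤ r ψ ∧ r ψ ≤ cγ + 1 / ((n₁ : ℝ) + 1)}) :=
        measure_mono hsub
    _ ≤ Post {ψ | ψ ∈ Ψ ∧ η' / 3 ≤ |f l ψ - r ψ|}
        + Post {ψ | ψ ∈ Ψ ∧ a - 1 / ((n₁ : ℝ) + 1) ≤ r ψ ∧ r ψ ≤ cγ + 1 / ((n₁ : ℝ) + 1)} :=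
        measure_union_le _ _
    _ ≤ ε / 2 + ε / 2 := add_le_add h3.le hn₁.le
    _ = ε := ENNReal.add_halves ε


/-- **Theorem 10.** Under a regular discretization of `Ψ`, with the
discretized relative belief ratios converging pointwise to `q/p` and the relative
belief ratio having a continuous posterior distribution, the undiscretized
`γ`-relative surprise regions `C_{λ,γ}` of the discretized problems converge to the
`γ`-relative surprise region `C_γ` in posterior measure of the symmetric
difference. -/
theorem stmt_16 {k : ℕ} (Ψ : Set (EuclideanSpace ℝ (Fin k))) (hΨopen : IsOpen Ψ)
    (p q : EuclideanSpace ℝ (Fin k) → ℝ)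
    (hpc : Continuous p) (hppos : ∀ x, 0 < p x)
    (hqm : Measurable q) (hqnn : ∀ x, 0 ≤ q x)
    (Pri Post : Measure (EuclideanSpace ℝ (Fin k)))
    [IsProbabilityMeasure Pri] [IsProbabilityMeasure Post]
    (hPri : Pri = (volume.restrict Ψ).withDensity fun x => ENNReal.ofReal (p x))
    (hPost : Post = (volume.restrict Ψ).withDensity fun x => ENNReal.ofReal (q x))
    (B : ℝ → EuclideanSpace ℝ (Fin k) → Set (EuclideanSpace ℝ (Fin k)))
    (hB : IsRegularDiscretization Ψ Pri B)
    (hconv : ∀ ψ ∈ Ψ,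
      Tendsto (fun l => (Post (B l ψ)).toReal / (Pri (B l ψ)).toReal)
        (𝓝[>] 0) (𝓝 (q ψ / p ψ)))
    (hcontdist : ∀ c : ℝ, 0 ≤ c → Post {ψ ∈ Ψ | q ψ / p ψ = c} = 0)
    (γ : ℝ) (hγ : 0 < γ) (hγ1 : γ < 1)
    (S : ℝ → Set (EuclideanSpace ℝ (Fin k)))
    (hS : ∀ c, S c = {ψ ∈ Ψ | c ≤ q ψ / p ψ})
    (Sl : ℝ → ℝ → Set (EuclideanSpace ℝ (Fin k)))
    (hSl : ∀ l c, Sl l c = {ψ ∈ Ψ | c ≤ (Post (B l ψ)).toReal / (Pri (B l ψ)).toReal})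
    (cγ : ℝ) (hcγ : cγ = sSup {c : ℝ | 0 ≤ c ∧ γ ≤ (Post (S c)).toReal})
    (Cγ : Set (EuclideanSpace ℝ (Fin k))) (hCγ : Cγ = S cγ)
    (cl : ℝ → ℝ) (hcl : ∀ l, cl l = sSup {c : ℝ | 0 ≤ c ∧ γ ≤ (Post (Sl l c)).toReal})
    (Cl : ℝ → Set (EuclideanSpace ℝ (Fin k))) (hCl : ∀ l, Cl l = Sl l (cl l)) :
    Tendsto (fun l => Post (Cl l ∆ Cγ)) (𝓝[>] 0) (𝓝 0) := by
  exact stmt_16_aux Ψ hΨopen p q hpc hppos hqm hqnn Pri Post hPri hPost B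
    hB.mem_cell hB.measurable_cell hB.cell_subset hB.partition hB.countable_cells
    hconv hcontdist γ hγ hγ1 S hS Sl hSl cγ hcγ Cγ hCγ cl hcl Cl hCl
end

section
/- Let Ψ be an open subset of ℝ^k with ν Lebesgue measure and the prior Π and posterior Π_post probability measures on Ψ with densities p and q with respect to ν, p continuous and strictly positive. Suppose {B_λ(ψ) : ψ ∈ Ψ} is a regular discretization of Ψ for each λ > 0, that Π_post(B_λ(ψ))/Π(B_λ(ψ)) → q(ψ)/p(ψ) as λ → 0 for every ψ, and that Π_post({ψ : q(ψ)/p(ψ) = c}) = 0 for every c ≥ 0. Fix γ ∈ (0, 1) and let C_γ be the γ-relative surprise region. For η, λ > 0 define R_{η,λ}(ψ) = Π_post(B_λ(ψ))/max(η, Π(B_λ(ψ))), l_{η,λ,γ} = sup{k : Π_post({ψ : R_{η,λ}(ψ) ≥ k}) ≥ γ}, and the undiscretized lowest posterior loss region L_{η,λ,γ} = {ψ : R_{η,λ}(ψ) ≥ l_{η,λ,γ}}. Then Π_post((liminf_{η → 0} L_{η,λ,γ}) Δ C_γ) → 0 and Π_post((limsup_{η → 0} L_{η,λ,γ}) Δ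 C_γ) → 0 as λ → 0, where liminf_{η → 0} L_{η,λ,γ} = {ψ : ∃η₀ > 0, ∀η ∈ (0, η₀), ψ ∈ L_{η,λ,γ}} and limsup_{η → 0} L_{η,λ,γ} = {ψ : ∀η₀ > 0, ∃η ∈ (0, η₀), ψ ∈ L_{η,λ,γ}}. -/
open MeasureTheory Filter
open scoped Topology symmDiff

set_option maxHeartbeats 2000000

/-- **Theorem 11.** Under a regular discretization of `Ψ`, with the
discretized relative belief ratios converging pointwise to `q/p` and the relative
belief ratio having a continuous posterior distribution, the `liminf` and `limsup`
(as `η → 0`) of the undiscretized `γ`-lowest posterior loss regions `L_{η,λ,γ}`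
converge, as `λ → 0`, to the `γ`-relative surprise region `C_γ` in posterior measure
of the symmetric difference. -/
theorem stmt_17 {k : ℕ} (Ψ : Set (EuclideanSpace ℝ (Fin k))) (hΨopen : IsOpen Ψ)
    (p q : EuclideanSpace ℝ (Fin k) → ℝ)
    (hpc : Continuous p) (hppos : ∀ x, 0 < p x)
    (hqm : Measurable q) (hqnn : ∀ x, 0 ≤ q x)
    (Pri Post : Measure (EuclideanSpace ℝ (Fin k)))
    [IsProbabilityMeasure Pri] [IsProbabilityMeasure Post]
    (hPri : Pri = (volume.restrict Ψ).withDensity fun x => ENNReal.ofReal (p x))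
    (hPost : Post = (volume.restrict Ψ).withDensity fun x => ENNReal.ofReal (q x))
    (B : ℝ → EuclideanSpace ℝ (Fin k) → Set (EuclideanSpace ℝ (Fin k)))
    (hB : IsRegularDiscretization Ψ Pri B)
    (hconv : ∀ ψ ∈ Ψ,
      Tendsto (fun l => (Post (B l ψ)).toReal / (Pri (B l ψ)).toReal)
        (𝓝[>] 0) (𝓝 (q ψ / p ψ)))
    (hcontdist : ∀ c : ℝ, 0 ≤ c → Post {ψ ∈ Ψ | q ψ / p ψ = c} = 0)
    (γ : ℝ) (hγ : 0 < γ) (hγ1 : γ < 1)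
    (cγ : ℝ)
    (hcγ : cγ = sSup {c : ℝ | 0 ≤ c ∧ γ ≤ (Post {ψ ∈ Ψ | c ≤ q ψ / p ψ}).toReal})
    (Cγ : Set (EuclideanSpace ℝ (Fin k))) (hCγ : Cγ = {ψ ∈ Ψ | cγ ≤ q ψ / p ψ})
    (R : ℝ → ℝ → EuclideanSpace ℝ (Fin k) → ℝ)
    (hR : ∀ η l ψ, R η l ψ = (Post (B l ψ)).toReal / max η (Pri (B l ψ)).toReal)
    (lpl : ℝ → ℝ → ℝ)
    (hlpl : ∀ η l, lpl η l = sSup {c : ℝ | γ ≤ (Post {ψ ∈ Ψ | c ≤ R η l ψ}).toReal})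
    (L : ℝ → ℝ → Set (EuclideanSpace ℝ (Fin k)))
    (hLdef : ∀ η l, L η l = {ψ ∈ Ψ | lpl η l ≤ R η l ψ})
    (Linf Lsup : ℝ → Set (EuclideanSpace ℝ (Fin k)))
    (hLinf : ∀ l, Linf l = {ψ | ∃ η₀ > 0, ∀ η, 0 < η → η < η₀ → ψ ∈ L η l})
    (hLsup : ∀ l, Lsup l = {ψ | ∀ η₀ > 0, ∃ η, 0 < η ∧ η < η₀ ∧ ψ ∈ L η l}) :
    Tendsto (fun l => Post (Linf l ∆ Cγ)) (𝓝[>] 0) (𝓝 0) ∧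
    Tendsto (fun l => Post (Lsup l ∆ Cγ)) (𝓝[>] 0) (𝓝 0) := by
  classical
  have hΨm : MeasurableSet Ψ := hΨopen.measurableSet
  have hfin : ∀ A : Set (EuclideanSpace ℝ (Fin k)), Post A ≠ ⊤ := fun A => measure_ne_top Post A
  have hgnn : ∀ ψ, (0:ℝ) ≤ q ψ / p ψ := fun ψ => div_nonneg (hqnn ψ) (hppos ψ).le
  have hgm : Measurable fun ψ => q ψ / p ψ := hqm.div hpc.measurable
  have hPostc : Post Ψᶜ = 0 := by
    rw [hPost, withDensity_apply _ hΨm.compl, Measure.restrict_restrict hΨm.compl]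
    simp
  have hPostΨ : Post Ψ = 1 := by
    have h1 : Post Ψ + Post Ψᶜ = Post Set.univ := measure_add_measure_compl hΨm
    rw [hPostc, add_zero, measure_univ] at h1
    exact h1
  have hmono : ∀ {A A' : Set (EuclideanSpace ℝ (Fin k))}, A ⊆ A' →
      (Post A).toReal ≤ (Post A').toReal :=
    fun h => ENNReal.toReal_mono (hfin _) (measure_mono h)
  have hsub3 : ∀ A A' A'' : Set (EuclideanSpace ℝ (Fin k)), A ⊆ A' ∪ A'' →
      (Post A).toReal ≤ (Post A').toReal + (Post A'').toReal := by
    intro A A' A'' h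
    calc (Post A).toReal ≤ (Post (A' ∪ A'')).toReal := hmono h
      _ ≤ ((Post A') + (Post A'')).toReal :=
          ENNReal.toReal_mono (ENNReal.add_ne_top.2 ⟨hfin _, hfin _⟩) (measure_union_le _ _)
      _ = _ := ENNReal.toReal_add (hfin _) (hfin _)
  -- measurability of cell-determined sets
  have hcellm : ∀ {l : ℝ}, 0 < l →
      ∀ (P : Set (EuclideanSpace ℝ (Fin k)) → EuclideanSpace ℝ (Fin k) → Prop),
      (∀ S, MeasurableSet {x | P S x}) →
      MeasurableSet {ψ | ψ ∈ Ψ ∧ P (B l ψ) ψ} := by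
    intro l hl P hP
    have heq : {ψ | ψ ∈ Ψ ∧ P (B l ψ) ψ} = ⋃ S ∈ B l '' Ψ, (S ∩ {x | P S x}) := by
      ext x
      simp only [Set.mem_setOf_eq, Set.mem_iUnion, Set.mem_inter_iff, exists_prop]
      constructor
      · rintro ⟨hx, hPx⟩
        exact ⟨B l x, ⟨x, hx, rfl⟩, hB.mem_cell hl x hx, hPx⟩
      · rintro ⟨S, ⟨ψ₀, hψ₀, rfl⟩, hxS, hPx⟩
        have hxΨ : x ∈ Ψ := hB.cell_subset hl ψ₀ hψ₀ hxS
        have hBx : B l x = B l ψ₀ := hB.partition hl ψ₀ hψ₀ x hxΨ hxS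
        exact ⟨hxΨ, hBx ▸ hPx⟩
    rw [heq]
    refine MeasurableSet.biUnion (hB.countable_cells hl) ?_
    rintro S ⟨ψ₀, hψ₀, rfl⟩
    exact (hB.measurable_cell hl ψ₀ hψ₀).inter (hP _)
  -- abbreviations
  set g : EuclideanSpace ℝ (Fin k) → ℝ := fun ψ => q ψ / p ψ with hgdef
  set G : ℝ → ℝ := fun c => (Post {ψ | ψ ∈ Ψ ∧ c ≤ g ψ}).toReal with hGdef
  set f : ℝ → EuclideanSpace ℝ (Fin k) → ℝ :=
    fun l ψ => (Post (B l ψ)).toReal / (Pri (B l ψ)).toReal with hfdef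
  set F : ℝ → ℝ → ℝ → ℝ :=
    fun η l c => (Post {ψ | ψ ∈ Ψ ∧ c ≤ R η l ψ}).toReal with hFdef
  set F0 : ℝ → ℝ → ℝ := fun l c => (Post {ψ | ψ ∈ Ψ ∧ c ≤ f l ψ}).toReal with hF0def
  set m : ℝ → ℝ → ℝ :=
    fun l β => (Post {ψ | ψ ∈ Ψ ∧ β < |f l ψ - g ψ|}).toReal with hmdef
  set tl : ℝ → ℝ := fun l => sSup ((fun η => lpl η l) '' Set.Ioi (0:ℝ)) with htldef
  set D : ℝ → Set (EuclideanSpace ℝ (Fin k)) :=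
    fun l => {ψ | ψ ∈ Ψ ∧ tl l ≤ f l ψ} with hDdef
  have hlplF : ∀ η l, lpl η l = sSup {c | γ ≤ F η l c} := hlpl
  have hGcγset : (Post Cγ).toReal = G cγ := by rw [hCγ]
  have hcγG : cγ = sSup {c : ℝ | 0 ≤ c ∧ γ ≤ G c} := hcγ
  -- measurability of key sets
  have hfm : ∀ {l : ℝ}, 0 < l → ∀ c : ℝ, MeasurableSet {ψ | ψ ∈ Ψ ∧ c ≤ f l ψ} := by
    intro l hl c
    exact hcellm hl (fun S x => c ≤ (Post S).toReal / (Pri S).toReal)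
      (fun S => by by_cases h : c ≤ (Post S).toReal / (Pri S).toReal <;> simp [h])
  have hRm : ∀ {l : ℝ}, 0 < l → ∀ η c : ℝ, MeasurableSet {ψ | ψ ∈ Ψ ∧ c ≤ R η l ψ} := by
    intro l hl η c
    simp only [hR]
    exact hcellm hl (fun S x => c ≤ (Post S).toReal / max η (Pri S).toReal)
      (fun S => by by_cases h : c ≤ (Post S).toReal / max η (Pri S).toReal <;> simp [h])
  have hmm : ∀ {l : ℝ}, 0 < l → ∀ β : ℝ,
      MeasurableSet {ψ | ψ ∈ Ψ ∧ β < |f l ψ - g ψ|} := by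
    intro l hl β
    exact hcellm hl
      (fun S x => β < |(Post S).toReal / (Pri S).toReal - g x|)
      (fun S => measurableSet_lt measurable_const ((measurable_const.sub hgm).abs))
  have hCm : MeasurableSet Cγ := by
    rw [hCγ]
    exact hΨm.inter (hgm measurableSet_Ici)
  -- facts about G
  have hGanti : ∀ {c c' : ℝ}, c ≤ c' → G c' ≤ G c := by
    intro c c' h
    exact hmono (fun ψ hψ => ⟨hψ.1, h.trans hψ.2⟩)
  have hG1 : ∀ c : ℝ, c ≤ 0 → G c = 1 := by
    intro c hc
    have : {ψ | ψ ∈ Ψ ∧ c ≤ g ψ} = Ψ := by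
      ext ψ; simp only [Set.mem_setOf_eq]
      exact ⟨fun h => h.1, fun h => ⟨h, hc.trans (hgnn ψ)⟩⟩
    rw [hGdef]; simp only [this, hPostΨ, ENNReal.toReal_one]
  have hGbdd : ∃ Cb : ℝ, G Cb < γ := by
    have hiI : Tendsto (fun n : ℕ => Post {ψ | ψ ∈ Ψ ∧ (n:ℝ) ≤ g ψ}) atTop
        (𝓝 (Post (⋂ n : ℕ, {ψ | ψ ∈ Ψ ∧ (n:ℝ) ≤ g ψ}))) :=
      tendsto_measure_iInter_atTop
        (fun n => (hΨm.inter (hgm measurableSet_Ici)).nullMeasurableSet)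
        (fun n n' hnn' ψ hψ => ⟨hψ.1, le_trans (by exact_mod_cast hnn') hψ.2⟩)
        ⟨0, hfin _⟩
    have hempty : (⋂ n : ℕ, {ψ | ψ ∈ Ψ ∧ (n:ℝ) ≤ g ψ}) = ∅ := by
      ext ψ
      simp only [Set.mem_iInter, Set.mem_setOf_eq, Set.mem_empty_iff_false, iff_false, not_forall]
      obtain ⟨n, hn⟩ := exists_nat_gt (g ψ)
      exact ⟨n, fun h => absurd h.2 (not_le.2 hn)⟩
    rw [hempty, measure_empty] at hiI
    have htoR := (ENNReal.tendsto_toReal ENNReal.zero_ne_top).comp hiI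
    rw [ENNReal.toReal_zero] at htoR
    obtain ⟨n, hn⟩ := (htoR.eventually_lt_const hγ).exists
    exact ⟨n, hn⟩
  have hScγne : Set.Nonempty {c : ℝ | 0 ≤ c ∧ γ ≤ G c} :=
    ⟨0, le_refl 0, by rw [hG1 0 le_rfl]; linarith⟩
  have hScγbdd : BddAbove {c : ℝ | 0 ≤ c ∧ γ ≤ G c} := by
    obtain ⟨Cb, hCb⟩ := hGbdd
    refine ⟨Cb, fun c hc => ?_⟩
    by_contra hcc
    push_neg at hcc
    exact absurd (hc.2.trans (hGanti hcc.le)) (not_le.2 hCb)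
  have hcγ0 : 0 ≤ cγ := by
    rw [hcγG]
    exact le_csSup hScγbdd ⟨le_refl 0, by rw [hG1 0 le_rfl]; linarith⟩
  have hGgt : ∀ c : ℝ, cγ < c → G c < γ := by
    intro c hc
    by_contra hcc
    push_neg at hcc
    have : c ∈ {c : ℝ | 0 ≤ c ∧ γ ≤ G c} := ⟨(hcγ0.trans hc.le), hcc⟩
    exact absurd (le_csSup hScγbdd this) (by rw [← hcγG]; exact not_le.2 hc)
  have hGge : ∀ c : ℝ, c < cγ → γ ≤ G c := by
    intro c hc
    rw [hcγG] at hc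
    obtain ⟨c', hc'S, hcc'⟩ := exists_lt_of_lt_csSup hScγne hc
    exact hc'S.2.trans (hGanti hcc'.le)
  have hGcγ : G cγ = γ := by
    have hge : γ ≤ G cγ := by
      have hiI : Tendsto (fun n : ℕ => Post {ψ | ψ ∈ Ψ ∧ cγ - 1/(n+1) ≤ g ψ}) atTop
          (𝓝 (Post (⋂ n : ℕ, {ψ | ψ ∈ Ψ ∧ cγ - 1/(n+1) ≤ g ψ}))) := by
        refine tendsto_measure_iInter_atTop
          (fun n => (hΨm.inter (hgm measurableSet_Ici)).nullMeasurableSet) ?_ ⟨0, hfin _⟩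
        intro n n' hnn' ψ hψ
        refine ⟨hψ.1, le_trans (by
          have : (1:ℝ)/(n'+1) ≤ 1/(n+1) :=
            one_div_le_one_div_of_le (by positivity) (by exact_mod_cast by linarith [hnn'])
          linarith) hψ.2⟩
      have hiIeq : (⋂ n : ℕ, {ψ | ψ ∈ Ψ ∧ cγ - 1/(n+1) ≤ g ψ}) = {ψ | ψ ∈ Ψ ∧ cγ ≤ g ψ} := by
        ext ψ
        simp only [Set.mem_iInter, Set.mem_setOf_eq]
        constructor
        · intro h
          refine ⟨(h 0).1, ?_⟩
          by_contra hlt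
          push_neg at hlt
          obtain ⟨n, hn⟩ := exists_nat_one_div_lt (by linarith : (0:ℝ) < cγ - g ψ)
          have := (h n).2
          linarith
        · intro h n
          exact ⟨h.1, by linarith [h.2, (by positivity : (0:ℝ) < 1/((n:ℝ)+1))]⟩
      rw [hiIeq] at hiI
      have htoR := (ENNReal.tendsto_toReal (hfin _)).comp hiI
      refine ge_of_tendsto htoR ?_
      filter_upwards with n
      exact hGge _ (by linarith [(by positivity : (0:ℝ) < 1/((n:ℝ)+1))])
    have hle : G cγ ≤ γ := by
      have hiU : Tendsto (fun n : ℕ => Post {ψ | ψ ∈ Ψ ∧ cγ + 1/(n+1) ≤ g ψ}) atTop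
          (𝓝 (Post (⋃ n : ℕ, {ψ | ψ ∈ Ψ ∧ cγ + 1/(n+1) ≤ g ψ}))) := by
        refine tendsto_measure_iUnion_atTop ?_
        intro n n' hnn' ψ hψ
        refine ⟨hψ.1, le_trans (by
          have : (1:ℝ)/(n'+1) ≤ 1/(n+1) :=
            one_div_le_one_div_of_le (by positivity) (by exact_mod_cast by linarith [hnn'])
          linarith) hψ.2⟩
      have hUeq : (⋃ n : ℕ, {ψ | ψ ∈ Ψ ∧ cγ + 1/(n+1) ≤ g ψ}) = {ψ | ψ ∈ Ψ ∧ cγ < g ψ} := by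
        ext ψ
        simp only [Set.mem_iUnion, Set.mem_setOf_eq]
        constructor
        · rintro ⟨n, hψ, hle⟩
          exact ⟨hψ, by linarith [(by positivity : (0:ℝ) < 1/((n:ℝ)+1))]⟩
        · rintro ⟨hψ, hlt⟩
          obtain ⟨n, hn⟩ := exists_nat_one_div_lt (by linarith : (0:ℝ) < g ψ - cγ)
          exact ⟨n, hψ, by linarith⟩
      rw [hUeq] at hiU
      have htoR := (ENNReal.tendsto_toReal (hfin _)).comp hiU
      have hlim : (Post {ψ | ψ ∈ Ψ ∧ cγ < g ψ}).toReal ≤ γ := by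
        refine le_of_tendsto htoR ?_
        filter_upwards with n
        exact (hGgt _ (by linarith [(by positivity : (0:ℝ) < 1/((n:ℝ)+1))])).le
      have hzero : Post {ψ | ψ ∈ Ψ ∧ g ψ = cγ} = 0 := hcontdist cγ hcγ0
      have hsplit : G cγ ≤ (Post {ψ | ψ ∈ Ψ ∧ cγ < g ψ}).toReal
          + (Post {ψ | ψ ∈ Ψ ∧ g ψ = cγ}).toReal := by
        refine hsub3 _ _ _ ?_
        intro ψ hψ
        rcases lt_or_eq_of_le hψ.2 with h | h
        · exact Or.inl ⟨hψ.1, h⟩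
        · exact Or.inr ⟨hψ.1, h.symm⟩
      rw [hzero] at hsplit
      simpa using le_trans hsplit (by simpa using hlim)
    linarith
  have hPCγ : (Post Cγ).toReal = γ := by rw [hGcγset, hGcγ]
  -- basic facts about f and R
  have hfnn : ∀ l ψ, 0 ≤ f l ψ := fun l ψ => div_nonneg ENNReal.toReal_nonneg ENNReal.toReal_nonneg
  have hPripos : ∀ {l : ℝ}, 0 < l → ∀ ψ ∈ Ψ, 0 < (Pri (B l ψ)).toReal := by
    intro l hl ψ hψ
    exact ENNReal.toReal_pos (hB.pos_prior hl ψ hψ).ne' (measure_ne_top Pri _)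
  have hRnn : ∀ {η : ℝ}, 0 < η → ∀ l ψ, 0 ≤ R η l ψ := by
    intro η hη l ψ
    rw [hR]
    exact div_nonneg ENNReal.toReal_nonneg (hη.le.trans (le_max_left _ _))
  have hRle : ∀ {l : ℝ}, 0 < l → ∀ (η : ℝ), ∀ ψ ∈ Ψ, R η l ψ ≤ f l ψ := by
    intro l hl η ψ hψ
    rw [hR]
    exact div_le_div_of_nonneg_left ENNReal.toReal_nonneg (hPripos hl ψ hψ) (le_max_right _ _)
  have hRanti : ∀ {η η' : ℝ}, 0 < η → η ≤ η' → ∀ l ψ, R η' l ψ ≤ R η l ψ := by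
    intro η η' hη hηη' l ψ
    rw [hR, hR]
    exact div_le_div_of_nonneg_left ENNReal.toReal_nonneg
      (lt_of_lt_of_le hη (le_max_left _ _)) (max_le_max hηη' le_rfl)
  have hReq : ∀ {l : ℝ}, 0 < l → ∀ (η : ℝ), ∀ ψ ∈ Ψ, η ≤ (Pri (B l ψ)).toReal →
      R η l ψ = f l ψ := by
    intro l hl η ψ hψ hle
    rw [hR, hfdef, max_eq_right hle]
  -- the sets {c | γ ≤ F η l c}
  have hF1 : ∀ (η : ℝ), 0 < η → ∀ l, γ ≤ F η l 0 := by
    intro η hη l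
    have : {ψ | ψ ∈ Ψ ∧ (0:ℝ) ≤ R η l ψ} = Ψ := by
      ext ψ; simp only [Set.mem_setOf_eq]
      exact ⟨fun h => h.1, fun h => ⟨h, hRnn hη l ψ⟩⟩
    rw [hFdef]; simp only [this, hPostΨ, ENNReal.toReal_one]; linarith
  have hSne : ∀ (η : ℝ), 0 < η → ∀ l, Set.Nonempty {c | γ ≤ F η l c} :=
    fun η hη l => ⟨0, hF1 η hη l⟩
  have hFanti : ∀ η l, ∀ {c c' : ℝ}, c ≤ c' → F η l c' ≤ F η l c := by
    intro η l c c' h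
    exact hmono (fun ψ hψ => ⟨hψ.1, h.trans hψ.2⟩)
  have hF0anti : ∀ l, ∀ {c c' : ℝ}, c ≤ c' → F0 l c' ≤ F0 l c := by
    intro l c c' h
    exact hmono (fun ψ hψ => ⟨hψ.1, h.trans hψ.2⟩)
  have hFle : ∀ {l : ℝ}, 0 < l → ∀ (η c : ℝ), F η l c ≤ F0 l c := by
    intro l hl η c
    exact hmono (fun ψ hψ => ⟨hψ.1, hψ.2.trans (hRle hl η ψ hψ.1)⟩)
  have hCl : ∀ {l : ℝ}, 0 < l → ∃ Cb : ℝ, F0 l Cb < γ := by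
    intro l hl
    have hiI : Tendsto (fun n : ℕ => Post {ψ | ψ ∈ Ψ ∧ (n:ℝ) ≤ f l ψ}) atTop
        (𝓝 (Post (⋂ n : ℕ, {ψ | ψ ∈ Ψ ∧ (n:ℝ) ≤ f l ψ}))) :=
      tendsto_measure_iInter_atTop
        (fun n => (hfm hl _).nullMeasurableSet)
        (fun n n' hnn' ψ hψ => ⟨hψ.1, le_trans (by exact_mod_cast hnn') hψ.2⟩)
        ⟨0, hfin _⟩
    have hempty : (⋂ n : ℕ, {ψ | ψ ∈ Ψ ∧ (n:ℝ) ≤ f l ψ}) = ∅ := by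
      ext ψ
      simp only [Set.mem_iInter, Set.mem_setOf_eq, Set.mem_empty_iff_false, iff_false, not_forall]
      obtain ⟨n, hn⟩ := exists_nat_gt (f l ψ)
      exact ⟨n, fun h => absurd h.2 (not_le.2 hn)⟩
    rw [hempty, measure_empty] at hiI
    have htoR := (ENNReal.tendsto_toReal ENNReal.zero_ne_top).comp hiI
    rw [ENNReal.toReal_zero] at htoR
    obtain ⟨n, hn⟩ := (htoR.eventually_lt_const hγ).exists
    exact ⟨n, hn⟩
  have hSbdd : ∀ {l : ℝ}, 0 < l → ∀ (η : ℝ), BddAbove {c | γ ≤ F η l c} := by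
    intro l hl η
    obtain ⟨Cb, hCb⟩ := hCl hl
    refine ⟨Cb, fun c hc => ?_⟩
    by_contra hcc
    push_neg at hcc
    have : F η l c ≤ F0 l Cb := (hFle hl η c).trans (hF0anti l hcc.le)
    exact absurd (hc.trans this) (not_le.2 hCb)
  have htlbdd : ∀ {l : ℝ}, 0 < l → BddAbove ((fun η => lpl η l) '' Set.Ioi (0:ℝ)) := by
    intro l hl
    obtain ⟨Cb, hCb⟩ := hCl hl
    refine ⟨Cb, ?_⟩
    rintro x ⟨η, hη, rfl⟩
    show lpl η l ≤ Cb
    rw [hlplF]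
    refine csSup_le (hSne η hη l) (fun c hc => ?_)
    by_contra hcc
    push_neg at hcc
    have : F η l c ≤ F0 l Cb := (hFle hl η c).trans (hF0anti l hcc.le)
    exact absurd (hc.trans this) (not_le.2 hCb)
  have hlplmono : ∀ {l : ℝ}, 0 < l → ∀ {η η' : ℝ}, 0 < η → η ≤ η' →
      lpl η' l ≤ lpl η l := by
    intro l hl η η' hη hηη'
    rw [hlplF, hlplF]
    refine csSup_le_csSup (hSbdd hl η) (hSne η' (lt_of_lt_of_le hη hηη') l) (fun c hc => ?_)
    show γ ≤ F η l c
    refine hc.trans (hmono ?_)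
    intro ψ hψ
    exact ⟨hψ.1, hψ.2.trans (hRanti hη hηη' l ψ)⟩
  have htub : ∀ {l : ℝ}, 0 < l → ∀ {η : ℝ}, 0 < η → lpl η l ≤ tl l := by
    intro l hl η hη
    exact le_csSup (htlbdd hl) (Set.mem_image_of_mem _ (Set.mem_Ioi.2 hη))
  have htlub : ∀ {l : ℝ}, 0 < l → ∀ r : ℝ, (∀ η : ℝ, 0 < η → lpl η l ≤ r) → tl l ≤ r := by
    intro l hl r h
    refine csSup_le ⟨lpl 1 l, Set.mem_image_of_mem _ (Set.mem_Ioi.2 one_pos)⟩ ?_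
    rintro x ⟨η, hη, rfl⟩
    exact h η hη
  -- identification of Linf and Lsup with D
  have hsets : ∀ {l : ℝ}, 0 < l → Linf l = D l ∧ Lsup l = D l := by
    intro l hl
    have hDsub : D l ⊆ {ψ | ∃ η₀ > 0, ∀ η, 0 < η → η < η₀ → ψ ∈ L η l} := by
      rintro ψ ⟨hψ, hle⟩
      refine ⟨(Pri (B l ψ)).toReal, hPripos hl ψ hψ, fun η hη hηa => ?_⟩
      rw [hLdef]
      refine ⟨hψ, ?_⟩
      rw [hReq hl η ψ hψ hηa.le]
      exact (htub hl hη).trans hle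
    have hIS : {ψ | ∃ η₀ > 0, ∀ η, 0 < η → η < η₀ → ψ ∈ L η l} ⊆
        {ψ | ∀ η₀ > 0, ∃ η, 0 < η ∧ η < η₀ ∧ ψ ∈ L η l} := by
      rintro ψ ⟨η₁, hη₁, h⟩ η₀ hη₀
      have hmin : 0 < min η₀ η₁ := lt_min hη₀ hη₁
      refine ⟨min η₀ η₁ / 2, by positivity,
        lt_of_lt_of_le (half_lt_self hmin) (min_le_left _ _),
        h _ (by positivity) (lt_of_lt_of_le (half_lt_self hmin) (min_le_right _ _))⟩
    have hSD : {ψ | ∀ η₀ > 0, ∃ η, 0 < η ∧ η < η₀ ∧ ψ ∈ L η l} ⊆ D l := by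
      intro ψ hψ'
      obtain ⟨η₂, hη₂, _, hmem⟩ := hψ' 1 one_pos
      rw [hLdef] at hmem
      have hψ : ψ ∈ Ψ := hmem.1
      have ha : 0 < (Pri (B l ψ)).toReal := hPripos hl ψ hψ
      refine ⟨hψ, ?_⟩
      refine htlub hl _ (fun η' hη' => ?_)
      obtain ⟨η, hη, hηlt, hmem'⟩ := hψ' (min η' (Pri (B l ψ)).toReal) (lt_min hη' ha)
      rw [hLdef] at hmem'
      have h3 : η ≤ (Pri (B l ψ)).toReal := (hηlt.trans_le (min_le_right _ _)).le
      have h4 := hmem'.2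
      rw [hReq hl η ψ hψ h3] at h4
      exact (hlplmono hl hη (hηlt.trans_le (min_le_left _ _)).le).trans h4
    constructor
    · rw [hLinf]
      exact subset_antisymm (fun ψ h => hSD (hIS h)) hDsub
    · rw [hLsup]
      exact subset_antisymm hSD (fun ψ h => hIS (hDsub h))
  -- threshold characterizations
  have h1 : ∀ {l : ℝ}, 0 < l → ∀ c : ℝ, c < tl l → γ ≤ F0 l c := by
    intro l hl c hc
    obtain ⟨x, ⟨η, hη, rfl⟩, hcx⟩ :=
      exists_lt_of_lt_csSup
        (⟨lpl 1 l, Set.mem_image_of_mem _ (Set.mem_Ioi.2 one_pos)⟩ :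
          Set.Nonempty ((fun η => lpl η l) '' Set.Ioi (0:ℝ))) hc
    have hcx : c < lpl η l := hcx
    rw [hlplF] at hcx
    obtain ⟨c', hc'S, hcc'⟩ := exists_lt_of_lt_csSup (hSne η hη l) hcx
    exact hc'S.trans ((hFanti η l hcc'.le).trans (hFle hl η c))
  have h2 : ∀ {l : ℝ}, 0 < l → ∀ c : ℝ, γ < F0 l c → c ≤ tl l := by
    intro l hl c hc
    have hmonoA : Monotone (fun n : ℕ => {ψ | ψ ∈ Ψ ∧ c ≤ R (1/(n+1)) l ψ}) := by
      intro n n' hnn' ψ hψ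
      refine ⟨hψ.1, hψ.2.trans (hRanti (by positivity) ?_ l ψ)⟩
      exact one_div_le_one_div_of_le (by positivity) (by exact_mod_cast by linarith [hnn'])
    have hU : (⋃ n : ℕ, {ψ | ψ ∈ Ψ ∧ c ≤ R (1/(n+1)) l ψ}) = {ψ | ψ ∈ Ψ ∧ c ≤ f l ψ} := by
      ext ψ
      simp only [Set.mem_iUnion, Set.mem_setOf_eq]
      constructor
      · rintro ⟨n, hψ, hle⟩
        exact ⟨hψ, hle.trans (hRle hl _ ψ hψ)⟩
      · rintro ⟨hψ, hle⟩
        obtain ⟨n, hn⟩ := exists_nat_one_div_lt (hPripos hl ψ hψ)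
        refine ⟨n, hψ, ?_⟩
        rw [hReq hl _ ψ hψ hn.le]
        exact hle
    have hiU := tendsto_measure_iUnion_atTop (μ := Post)
      (s := fun n : ℕ => {ψ | ψ ∈ Ψ ∧ c ≤ R (1/(n+1)) l ψ}) hmonoA
    rw [hU] at hiU
    have htoR := (ENNReal.tendsto_toReal (hfin _)).comp hiU
    have hev : ∀ᶠ n : ℕ in atTop, γ < F (1/(n+1)) l c := htoR.eventually_const_lt hc
    obtain ⟨n, hn⟩ := hev.exists
    have hstep : c ≤ lpl (1/(n+1)) l := by
      rw [hlplF]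
      exact le_csSup (hSbdd hl _) hn.le
    exact hstep.trans (htub hl (by positivity))
  -- comparison inequalities
  have hcomp1 : ∀ (l c β : ℝ), 0 < β → F0 l c ≤ G (c - β) + m l β := by
    intro l c β hβ
    refine hsub3 _ _ _ (fun ψ hψ => ?_)
    by_cases h : β < |f l ψ - g ψ|
    · exact Or.inr ⟨hψ.1, h⟩
    · push_neg at h
      have := abs_le.1 h
      exact Or.inl ⟨hψ.1, by linarith [hψ.2]⟩
  have hcomp2 : ∀ (l c β : ℝ), 0 < β → G (c + β) ≤ F0 l c + m l β := by
    intro l c β hβ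
    refine hsub3 _ _ _ (fun ψ hψ => ?_)
    by_cases h : β < |f l ψ - g ψ|
    · exact Or.inr ⟨hψ.1, h⟩
    · push_neg at h
      have := abs_le.1 h
      exact Or.inl ⟨hψ.1, by linarith [hψ.2]⟩
  -- main convergence for D
  have hMAIN : Tendsto (fun l => Post (D l ∆ Cγ)) (𝓝[>] (0:ℝ)) (𝓝 0) := by
    rw [Filter.tendsto_iff_seq_tendsto]
    intro u hu
    set u' : ℕ → ℝ := fun n => if 0 < u n then u n else 1 with hu'def
    have hu'pos : ∀ n, 0 < u' n := by
      intro n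
      show (0:ℝ) < if 0 < u n then u n else 1
      split
      · assumption
      · exact one_pos
    have huu' : ∀ᶠ n in atTop, u n = u' n := by
      have hev : ∀ᶠ n in atTop, u n ∈ Set.Ioi (0:ℝ) := hu self_mem_nhdsWithin
      filter_upwards [hev] with n hn
      show u n = if 0 < u n then u n else 1
      rw [if_pos (Set.mem_Ioi.1 hn)]
    have hu'0 : Tendsto u' atTop (𝓝[>] (0:ℝ)) := hu.congr' huu'
    suffices hmain' : Tendsto (fun n => Post (D (u' n) ∆ Cγ)) atTop (𝓝 0) by
      refine hmain'.congr' ?_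
      filter_upwards [huu'] with n hn
      simp only [Function.comp_apply, hn]
    have hptw : ∀ ψ ∈ Ψ, Tendsto (fun n => f (u' n) ψ) atTop (𝓝 (g ψ)) :=
      fun ψ hψ => (hconv ψ hψ).comp hu'0
    have hm0 : ∀ β : ℝ, 0 < β → Tendsto (fun n => m (u' n) β) atTop (𝓝 0) := by
      intro β hβ
      have hind : Tendsto (fun n => Post {ψ | ψ ∈ Ψ ∧ β < |f (u' n) ψ - g ψ|}) atTop
          (𝓝 (Post (∅ : Set (EuclideanSpace ℝ (Fin k))))) := by
        refine tendsto_measure_of_tendsto_indicator_of_isFiniteMeasure atTop Post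
          (fun n => hmm (hu'pos n) β) ?_
        intro x
        by_cases hx : x ∈ Ψ
        · have h0 : Tendsto (fun n => |f (u' n) x - g x|) atTop (𝓝 0) := by
            have hsb := (hptw x hx).sub_const (g x)
            rw [sub_self] at hsb
            simpa using hsb.abs
          filter_upwards [h0.eventually_lt_const hβ] with n hn
          simp only [Set.mem_setOf_eq, Set.mem_empty_iff_false, iff_false]
          exact fun h => absurd h.2 (not_lt.2 hn.le)
        · filter_upwards with n
          simp only [Set.mem_setOf_eq, Set.mem_empty_iff_false, iff_false]
          exact fun h => hx h.1
      rw [measure_empty] at hind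
      have htoR := (ENNReal.tendsto_toReal ENNReal.zero_ne_top).comp hind
      rw [ENNReal.toReal_zero] at htoR
      exact htoR
    have hkey : ∀ ε : ℝ, 0 < ε → ∀ᶠ n in atTop, (Post (D (u' n) ∆ Cγ)).toReal ≤ ε := by
      intro ε hε
      set δ := min (ε/7) ((1-γ)/2) with hδdef
      have hδ0 : 0 < δ := lt_min (by positivity) (by linarith)
      have hδ1 : δ ≤ ε/7 := min_le_left _ _
      have hδγ : δ ≤ (1-γ)/2 := min_le_right _ _
      -- Step A : choice of κ
      have hAiI : Tendsto
          (fun n : ℕ => Post {ψ | ψ ∈ Ψ ∧ cγ ≤ g ψ ∧ g ψ < cγ + 2*(1/(n+1))}) atTop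
          (𝓝 (Post (⋂ n : ℕ, {ψ | ψ ∈ Ψ ∧ cγ ≤ g ψ ∧ g ψ < cγ + 2*(1/(n+1))}))) := by
        refine tendsto_measure_iInter_atTop
          (fun n => (hΨm.inter (hgm measurableSet_Ico)).nullMeasurableSet) ?_ ⟨0, hfin _⟩
        intro n n' hnn' ψ hψ
        refine ⟨hψ.1, hψ.2.1, lt_of_lt_of_le hψ.2.2 (by
          have h11 : (1:ℝ)/(n'+1) ≤ 1/(n+1) :=
            one_div_le_one_div_of_le (by positivity) (by exact_mod_cast by linarith [hnn'])
          linarith)⟩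
      have hAeq : (⋂ n : ℕ, {ψ | ψ ∈ Ψ ∧ cγ ≤ g ψ ∧ g ψ < cγ + 2*(1/(n+1))})
          = {ψ | ψ ∈ Ψ ∧ g ψ = cγ} := by
        ext ψ
        simp only [Set.mem_iInter, Set.mem_setOf_eq]
        constructor
        · intro h
          refine ⟨(h 0).1, le_antisymm ?_ (h 0).2.1⟩
          by_contra hlt
          push_neg at hlt
          obtain ⟨n, hn⟩ := exists_nat_one_div_lt (by linarith : (0:ℝ) < (g ψ - cγ)/2)
          have := (h n).2.2
          linarith
        · rintro ⟨hψ, hgψ⟩ n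
          exact ⟨hψ, le_of_eq hgψ.symm,
            by rw [hgψ]; linarith [(by positivity : (0:ℝ) < 1/((n:ℝ)+1))]⟩
      have hAzero : Post {ψ | ψ ∈ Ψ ∧ g ψ = cγ} = 0 := hcontdist cγ hcγ0
      rw [hAeq, hAzero] at hAiI
      have hAtoR := (ENNReal.tendsto_toReal ENNReal.zero_ne_top).comp hAiI
      rw [ENNReal.toReal_zero] at hAtoR
      obtain ⟨nκ, hnκ⟩ := (hAtoR.eventually_lt_const hδ0).exists
      set κ : ℝ := 1/(nκ+1) with hκdef
      have hκ0 : 0 < κ := by positivity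
      have hQ : (Post {ψ | ψ ∈ Ψ ∧ cγ ≤ g ψ ∧ g ψ < cγ + 2*κ}).toReal ≤ δ := hnκ.le
      -- Step B : definition of v
      have hSvne : cγ ∈ {c : ℝ | 0 ≤ c ∧ G c ≤ γ + δ} := ⟨hcγ0, by rw [hGcγ]; linarith⟩
      have hSvbdd : BddBelow {c : ℝ | 0 ≤ c ∧ G c ≤ γ + δ} := ⟨0, fun c hc => hc.1⟩
      set v := sInf {c : ℝ | 0 ≤ c ∧ G c ≤ γ + δ} with hvdef
      have hv0 : 0 ≤ v := le_csInf ⟨cγ, hSvne⟩ (fun c hc => hc.1)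
      have hvlt : ∀ c : ℝ, c < v → γ + δ < G c := by
        intro c hc
        by_cases hc0 : 0 ≤ c
        · by_contra hcc
          push_neg at hcc
          exact absurd (csInf_le hSvbdd ⟨hc0, hcc⟩) (not_le.2 hc)
        · push_neg at hc0
          rw [hG1 c hc0.le]
          linarith
      have hGv : G v ≤ γ + δ := by
        have hUten : Tendsto (fun n : ℕ => Post {ψ | ψ ∈ Ψ ∧ v + 1/(n+1) ≤ g ψ}) atTop
            (𝓝 (Post (⋃ n : ℕ, {ψ | ψ ∈ Ψ ∧ v + 1/(n+1) ≤ g ψ}))) := by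
          refine tendsto_measure_iUnion_atTop ?_
          intro n n' hnn' ψ hψ
          refine ⟨hψ.1, le_trans (by
            have h11 : (1:ℝ)/(n'+1) ≤ 1/(n+1) :=
              one_div_le_one_div_of_le (by positivity) (by exact_mod_cast by linarith [hnn'])
            linarith) hψ.2⟩
        have hUeq : (⋃ n : ℕ, {ψ | ψ ∈ Ψ ∧ v + 1/(n+1) ≤ g ψ}) = {ψ | ψ ∈ Ψ ∧ v < g ψ} := by
          ext ψ
          simp only [Set.mem_iUnion, Set.mem_setOf_eq]
          constructor
          · rintro ⟨n, hψ, hle⟩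
            exact ⟨hψ, by linarith [(by positivity : (0:ℝ) < 1/((n:ℝ)+1))]⟩
          · rintro ⟨hψ, hlt⟩
            obtain ⟨n, hn⟩ := exists_nat_one_div_lt (by linarith : (0:ℝ) < g ψ - v)
            exact ⟨n, hψ, by linarith⟩
        rw [hUeq] at hUten
        have htoR := (ENNReal.tendsto_toReal (hfin _)).comp hUten
        have hlim : (Post {ψ | ψ ∈ Ψ ∧ v < g ψ}).toReal ≤ γ + δ := by
          refine le_of_tendsto htoR ?_
          filter_upwards with n
          obtain ⟨c, hcS, hclt⟩ := exists_lt_of_csInf_lt ⟨cγ, hSvne⟩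
            (show sInf {c : ℝ | 0 ≤ c ∧ G c ≤ γ + δ} < v + 1/(n+1) by
              rw [← hvdef]; linarith [(by positivity : (0:ℝ) < 1/((n:ℝ)+1))])
          exact le_trans (hGanti hclt.le) hcS.2
        have hzero : Post {ψ | ψ ∈ Ψ ∧ g ψ = v} = 0 := hcontdist v hv0
        have hsplit : G v ≤ (Post {ψ | ψ ∈ Ψ ∧ v < g ψ}).toReal
            + (Post {ψ | ψ ∈ Ψ ∧ g ψ = v}).toReal := by
          refine hsub3 _ _ _ ?_
          intro ψ hψ
          rcases lt_or_eq_of_le hψ.2 with h | h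
          · exact Or.inl ⟨hψ.1, h⟩
          · exact Or.inr ⟨hψ.1, h.symm⟩
        rw [hzero] at hsplit
        simp only [ENNReal.toReal_zero, add_zero] at hsplit
        linarith
      -- Step C : choice of β
      have hCiI : Tendsto (fun n : ℕ => Post {ψ | ψ ∈ Ψ ∧ v - 1/(n+1) ≤ g ψ}) atTop
          (𝓝 (Post (⋂ n : ℕ, {ψ | ψ ∈ Ψ ∧ v - 1/(n+1) ≤ g ψ}))) := by
        refine tendsto_measure_iInter_atTop
          (fun n => (hΨm.inter (hgm measurableSet_Ici)).nullMeasurableSet) ?_ ⟨0, hfin _⟩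
        intro n n' hnn' ψ hψ
        refine ⟨hψ.1, le_trans (by
          have h11 : (1:ℝ)/(n'+1) ≤ 1/(n+1) :=
            one_div_le_one_div_of_le (by positivity) (by exact_mod_cast by linarith [hnn'])
          linarith) hψ.2⟩
      have hCeq : (⋂ n : ℕ, {ψ | ψ ∈ Ψ ∧ v - 1/(n+1) ≤ g ψ}) = {ψ | ψ ∈ Ψ ∧ v ≤ g ψ} := by
        ext ψ
        simp only [Set.mem_iInter, Set.mem_setOf_eq]
        constructor
        · intro h
          refine ⟨(h 0).1, ?_⟩
          by_contra hlt
          push_neg at hlt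
          obtain ⟨n, hn⟩ := exists_nat_one_div_lt (by linarith : (0:ℝ) < v - g ψ)
          have := (h n).2
          linarith
        · intro h n
          exact ⟨h.1, by linarith [h.2, (by positivity : (0:ℝ) < 1/((n:ℝ)+1))]⟩
      rw [hCeq] at hCiI
      have hCtoR := (ENNReal.tendsto_toReal (hfin _)).comp hCiI
      have hGvlt : (Post {ψ | ψ ∈ Ψ ∧ v ≤ g ψ}).toReal < γ + 2*δ := by
        have : (Post {ψ | ψ ∈ Ψ ∧ v ≤ g ψ}).toReal = G v := rfl
        rw [this]
        linarith
      obtain ⟨nβ, hnβ⟩ := (hCtoR.eventually_lt_const hGvlt).exists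
      set β : ℝ := (1/(nβ+1))/2 with hβdef
      have hβ0 : 0 < β := by positivity
      have hβC : G (v - 2*β) ≤ γ + 2*δ := by
        have harith : v - 2*β = v - 1/(nβ+1) := by rw [hβdef]; ring
        rw [harith]
        exact hnβ.le
      -- Step D
      have hρpos : 0 < γ - G (cγ + κ/2) := by
        have := hGgt (cγ + κ/2) (by linarith)
        linarith
      -- Step E : eventual bounds
      filter_upwards [(hm0 (β/2) (by positivity)).eventually_lt_const hδ0,
        (hm0 β hβ0).eventually_lt_const hδ0,
        (hm0 (κ/2) (by positivity)).eventually_lt_const hρpos,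
        (hm0 κ hκ0).eventually_lt_const hδ0] with n h1' h2' h3' h4'
      set l := u' n with hldef
      have hl : 0 < l := hu'pos n
      have ht1 : v - β ≤ tl l := by
        refine h2 hl _ ?_
        have hc2 := hcomp2 l (v - β) (β/2) (by positivity)
        have harith : v - β + β/2 = v - β/2 := by ring
        rw [harith] at hc2
        have hvv := hvlt (v - β/2) (by linarith)
        linarith
      have ht2 : tl l ≤ cγ + κ := by
        by_contra hcc
        push_neg at hcc
        have hγle := h1 hl (cγ + κ) hcc
        have hc1 := hcomp1 l (cγ + κ) (κ/2) (by positivity)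
        have harith : cγ + κ - κ/2 = cγ + κ/2 := by ring
        rw [harith] at hc1
        linarith
      have hDm : MeasurableSet (D l) := hfm hl (tl l)
      have ht3 : (Post (D l)).toReal ≤ γ + 3*δ := by
        have hc1 := hcomp1 l (tl l) β hβ0
        have hGle : G (tl l - β) ≤ G (v - 2*β) := hGanti (by linarith)
        have hPDF : (Post (D l)).toReal = F0 l (tl l) := rfl
        linarith
      have ht4 : (Post (Cγ \ D l)).toReal ≤ 2*δ := by
        have hincl : Cγ \ D l ⊆ {ψ | ψ ∈ Ψ ∧ cγ ≤ g ψ ∧ g ψ < cγ + 2*κ}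
            ∪ {ψ | ψ ∈ Ψ ∧ κ < |f l ψ - g ψ|} := by
          rintro ψ ⟨hC, hnD⟩
          rw [hCγ] at hC
          have hψ : ψ ∈ Ψ := hC.1
          have hflt : f l ψ < tl l := by
            by_contra hge
            push_neg at hge
            exact hnD ⟨hψ, hge⟩
          by_cases hcase : g ψ < cγ + 2*κ
          · exact Or.inl ⟨hψ, hC.2, hcase⟩
          · push_neg at hcase
            refine Or.inr ⟨hψ, ?_⟩
            have hfκ : f l ψ < cγ + κ := lt_of_lt_of_le hflt ht2
            calc κ < g ψ - f l ψ := by linarith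
              _ ≤ |f l ψ - g ψ| := by rw [abs_sub_comm]; exact le_abs_self _
        have := hsub3 _ _ _ hincl
        linarith
      have ht5 : (Post (D l \ Cγ)).toReal ≤ 5*δ := by
        have q1 := measure_inter_add_diff (μ := Post) (D l) hCm
        have q2 := measure_inter_add_diff (μ := Post) Cγ hDm
        have q1' : (Post (D l ∩ Cγ)).toReal + (Post (D l \ Cγ)).toReal
            = (Post (D l)).toReal := by
          rw [← ENNReal.toReal_add (hfin _) (hfin _), q1]
        have q2' : (Post (Cγ ∩ D l)).toReal + (Post (Cγ \ D l)).toReal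
            = (Post Cγ).toReal := by
          rw [← ENNReal.toReal_add (hfin _) (hfin _), q2]
        rw [Set.inter_comm, hPCγ] at q2'
        linarith
      calc (Post (D l ∆ Cγ)).toReal
          ≤ (Post (D l \ Cγ)).toReal + (Post (Cγ \ D l)).toReal := by
            refine hsub3 _ _ _ ?_
            rw [Set.symmDiff_def]
        _ ≤ ε := by linarith
    have htr : Tendsto (fun n => (Post (D (u' n) ∆ Cγ)).toReal) atTop (𝓝 0) := by
      rw [Metric.tendsto_atTop]
      intro ε hε
      obtain ⟨N, hN⟩ := eventually_atTop.1 (hkey (ε/2) (by positivity))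
      refine ⟨N, fun n hn => ?_⟩
      rw [Real.dist_eq, sub_zero, abs_of_nonneg ENNReal.toReal_nonneg]
      linarith [hN n hn]
    have hofR := ENNReal.tendsto_ofReal htr
    rw [ENNReal.ofReal_zero] at hofR
    refine hofR.congr (fun n => ?_)
    exact ENNReal.ofReal_toReal (hfin _)
  constructor
  · refine hMAIN.congr' ?_
    filter_upwards [eventually_mem_nhdsWithin] with l hl
    rw [(hsets hl).1]
  · refine hMAIN.congr' ?_
    filter_upwards [eventually_mem_nhdsWithin] with l hl
    rw [(hsets hl).2]
end
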